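/- arXiv:2501.00400 — 4 statements merged into one kernel-verified Lean document; each statement's English description precedes it below -/
import Mathlib

section
/- Let n be a positive squarefree integer. The Diophantine equation n·X² − Y² − Z² = 0 has a solution in integers (X,Y,Z) ≠ (0,0,0) if and only if −1 is a quadratic residue modulo n, which holds if and only if n = 2^a·p₁·p₂⋯p_k with a ∈ {0,1} and every odd prime p_i dividing n satisfying p_i ≡ 1 (mod 4). -/
/-- If `p % 4 = 3` is prime and `p ∣ y² + z²`, then `p ∣ y` and `p ∣ z`. -/
lemma aux_dvd_of_dvd_sq_add_sq {p : ℕ} (hp : p.Prime) (hp3 : p % 4 = 3) {y z : ℤ}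
    (h : (p : ℤ) ∣ y ^ 2 + z ^ 2) : (p : ℤ) ∣ y ∧ (p : ℤ) ∣ z := by
  haveI : Fact p.Prime := ⟨hp⟩
  have h' : ((y : ZMod p)) ^ 2 + (z : ZMod p) ^ 2 = 0 := by
    have := (ZMod.intCast_zmod_eq_zero_iff_dvd (y ^ 2 + z ^ 2) p).mpr h
    push_cast at this
    exact this
  have hz : (z : ZMod p) = 0 := by
    by_contra hz0
    have hkey : ((y : ZMod p) * (z : ZMod p)⁻¹) ^ 2 = -1 := by
      rw [mul_pow]
      have hz2 : (z : ZMod p) ^ 2 ≠ 0 := pow_ne_zero _ hz0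
      have hinv : ((z : ZMod p)⁻¹) ^ 2 = ((z : ZMod p) ^ 2)⁻¹ := by
        rw [inv_pow]
      rw [hinv]
      field_simp
      linear_combination h'
    have hsq : IsSquare (-1 : ZMod p) := ⟨_, by rw [← hkey, sq]⟩
    exact (ZMod.exists_sq_eq_neg_one_iff.mp hsq) hp3
  have hy : (y : ZMod p) = 0 := by
    rw [hz] at h'
    simp only [ne_eq, OfNat.ofNat_ne_zero, not_false_eq_true, zero_pow, add_zero] at h'
    exact pow_eq_zero_iff two_ne_zero |>.mp h'
  exact ⟨(ZMod.intCast_zmod_eq_zero_iff_dvd y p).mp hy,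
    (ZMod.intCast_zmod_eq_zero_iff_dvd z p).mp hz⟩

lemma aux_isSquare_neg_one_iff {n : ℕ} (hn : Squarefree n) :
    IsSquare (-1 : ZMod n) ↔ ∀ {q : ℕ}, q.Prime → q ∣ n → q % 4 ≠ 3 :=
  (ZMod.isSquare_neg_one_iff_forall_mem_primeFactors_mod_four_ne_three hn).trans
    ⟨fun H q hq hd => H q (Nat.mem_primeFactors.mpr ⟨hq, hd, hn.ne_zero⟩),
      fun H q hq => H (Nat.prime_of_mem_primeFactors hq) (Nat.dvd_of_mem_primeFactors hq)⟩

/-- Descent: if a prime `p ≡ 3 (mod 4)` divides the squarefree number `n`, then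
`n X² = Y² + Z²` has no solution with `X ≠ 0`. -/
lemma aux_descent {p n : ℕ} (hp : p.Prime) (hp3 : p % 4 = 3) (hpn : p ∣ n)
    (hsf : Squarefree n) : ∀ k : ℕ, ∀ X Y Z : ℤ, X.natAbs = k → X ≠ 0 →
    (n : ℤ) * X ^ 2 = Y ^ 2 + Z ^ 2 → False := by
  obtain ⟨m, hm⟩ := hpn
  have hpm : ¬ p ∣ m := fun hd => hp.not_isUnit (hsf p (by
    obtain ⟨c, hc⟩ := hd; exact ⟨c, by rw [hm, hc]; ring⟩))
  have hpprime : Prime (p : ℤ) := Int.prime_iff_natAbs_prime.mpr (by simpa using hp)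
  intro k
  induction k using Nat.strong_induction_on with
  | _ k ih =>
    intro X Y Z hk hX0 heq
    have hdvd : (p : ℤ) ∣ Y ^ 2 + Z ^ 2 := ⟨m * X ^ 2, by rw [← heq, hm]; push_cast; ring⟩
    obtain ⟨hY, hZ⟩ := aux_dvd_of_dvd_sq_add_sq hp hp3 hdvd
    obtain ⟨y, hy⟩ := hY
    obtain ⟨z, hz⟩ := hZ
    have hp0 : (p : ℤ) ≠ 0 := by exact_mod_cast hp.pos.ne'
    have heq2 : (m : ℤ) * X ^ 2 = p * (y ^ 2 + z ^ 2) := by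
      apply mul_left_cancel₀ hp0
      rw [show (p:ℤ) * ((m:ℤ) * X ^ 2) = (n:ℤ) * X ^ 2 by rw [hm]; push_cast; ring,
        heq, hy, hz]
      ring
    have hpX : (p : ℤ) ∣ X := by
      have : (p : ℤ) ∣ (m : ℤ) * X ^ 2 := ⟨y ^ 2 + z ^ 2, heq2⟩
      rcases hpprime.dvd_mul.mp this with h | h
      · exact absurd (Int.ofNat_dvd.mp (by exact_mod_cast h)) hpm
      · exact hpprime.dvd_of_dvd_pow h
    obtain ⟨x, hx⟩ := hpX
    have hx0 : x ≠ 0 := fun h => hX0 (by rw [hx, h, mul_zero])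
    have heq3 : (n : ℤ) * x ^ 2 = y ^ 2 + z ^ 2 := by
      have : (p : ℤ) * ((n:ℤ) * x ^ 2) = p * (y ^ 2 + z ^ 2) := by
        apply mul_left_cancel₀ hp0
        have h4 : (p:ℤ) * ((p:ℤ) * ((n:ℤ) * x ^ 2)) = (n : ℤ) * X ^ 2 := by
          rw [hx]; ring
        rw [h4, heq, hy, hz]; ring
      exact mul_left_cancel₀ hp0 this
    have hlt : x.natAbs < k := by
      rw [← hk, hx, Int.natAbs_mul, Int.natAbs_natCast]
      have h2 : 2 ≤ p := hp.two_le
      have hxpos : 0 < x.natAbs := Int.natAbs_pos.mpr hx0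
      calc x.natAbs < 2 * x.natAbs := by omega
        _ ≤ p * x.natAbs := Nat.mul_le_mul_right _ h2
    exact ih x.natAbs hlt x y z rfl hx0 heq3

/-- For a positive squarefree integer `n`, the equation `n·X² − Y² − Z² = 0` has a nonzero
integer solution iff `−1` is a quadratic residue mod `n`, iff `n = 2^a · p₁ ⋯ p_k` with
`a ∈ {0,1}` and every odd prime `pᵢ` dividing `n` satisfying `pᵢ ≡ 1 (mod 4)`. -/
theorem nsq_sub_sq_sub_sq_solvable_iff (n : ℕ) (hn : 0 < n) (hsf : Squarefree n) :
    ((∃ X Y Z : ℤ, ¬(X = 0 ∧ Y = 0 ∧ Z = 0) ∧ (n : ℤ) * X ^ 2 - Y ^ 2 - Z ^ 2 = 0) ↔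
      ∃ x : ℤ, x ^ 2 ≡ -1 [ZMOD (n : ℤ)]) ∧
    ((∃ x : ℤ, x ^ 2 ≡ -1 [ZMOD (n : ℤ)]) ↔
      ∃ (a : ℕ) (s : Finset ℕ), a ≤ 1 ∧ (∀ p ∈ s, p.Prime ∧ p % 4 = 1) ∧
        n = 2 ^ a * ∏ p ∈ s, p) := by
  haveI : NeZero n := ⟨hn.ne'⟩
  -- QR condition ↔ IsSquare (-1 : ZMod n)
  have hQR : (∃ x : ℤ, x ^ 2 ≡ -1 [ZMOD (n : ℤ)]) ↔ IsSquare (-1 : ZMod n) := by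
    constructor
    · rintro ⟨x, hx⟩
      refine ⟨(x : ZMod n), ?_⟩
      have := (ZMod.intCast_eq_intCast_iff (x ^ 2) (-1) n).mpr hx
      push_cast at this
      rw [← this, sq]
    · rintro ⟨y, hy⟩
      refine ⟨(y.cast : ℤ), ?_⟩
      rw [← ZMod.intCast_eq_intCast_iff]
      push_cast [ZMod.intCast_zmod_cast]
      rw [← sq] at hy
      exact hy.symm
  -- IsSquare (-1 : ZMod n) ↔ decomposition
  have hDec : IsSquare (-1 : ZMod n) ↔
      ∃ (a : ℕ) (s : Finset ℕ), a ≤ 1 ∧ (∀ p ∈ s, p.Prime ∧ p % 4 = 1) ∧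
        n = 2 ^ a * ∏ p ∈ s, p := by
    constructor
    · intro h
      have hall : ∀ q : ℕ, q.Prime → q ∣ n → q % 4 ≠ 3 :=
        fun q hq hd => (aux_isSquare_neg_one_iff hsf).mp h hq hd
      have hprod : ∏ p ∈ n.primeFactors, p = n := Nat.prod_primeFactors_of_squarefree hsf
      by_cases h2 : 2 ∈ n.primeFactors
      · refine ⟨1, n.primeFactors.erase 2, le_refl 1, fun p hp => ?_, ?_⟩
        · have hpmem := Finset.mem_of_mem_erase hp
          have hp2 : p ≠ 2 := Finset.ne_of_mem_erase hp
          have hpp := Nat.prime_of_mem_primeFactors hpmem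
          refine ⟨hpp, ?_⟩
          have hne3 := hall p hpp (Nat.dvd_of_mem_primeFactors hpmem)
          have hodd : p % 2 = 1 := by
            haveI : Fact p.Prime := ⟨hpp⟩
            exact (Nat.Prime.mod_two_eq_one_iff_ne_two hpp).mpr hp2
          omega
        · rw [pow_one, Finset.mul_prod_erase n.primeFactors (fun p => p) h2, hprod]
      · refine ⟨0, n.primeFactors, Nat.zero_le 1, fun p hp => ?_, ?_⟩
        · have hpp := Nat.prime_of_mem_primeFactors hp
          refine ⟨hpp, ?_⟩
          have hne3 := hall p hpp (Nat.dvd_of_mem_primeFactors hp)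
          have hp2 : p ≠ 2 := fun h => h2 (h ▸ hp)
          have := hpp.two_le
          have hodd : ¬ 2 ∣ p := fun hd => hp2 ((Nat.prime_dvd_prime_iff_eq Nat.prime_two hpp).mp hd).symm
          omega
        · rw [pow_zero, one_mul, hprod]
    · rintro ⟨a, s, _, hs, rfl⟩
      apply (aux_isSquare_neg_one_iff hsf).mpr
      intro q hq hd
      rcases (Nat.Prime.prime hq).dvd_mul.mp hd with h | h
      · have hq2 : q ∣ 2 := hq.dvd_of_dvd_pow h
        have : q = 2 := (Nat.prime_dvd_prime_iff_eq hq Nat.prime_two).mp hq2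
        omega
      · obtain ⟨p, hps, hqp⟩ := (Prime.dvd_finset_prod_iff (Nat.Prime.prime hq) _).mp h
        have := (hs p hps).1
        have hq_eq : q = p := (Nat.prime_dvd_prime_iff_eq hq this).mp hqp
        have := (hs p hps).2
        omega
  refine ⟨?_, hQR.trans hDec⟩
  rw [hQR]
  constructor
  · rintro ⟨X, Y, Z, hnz, heq⟩
    have heq' : (n : ℤ) * X ^ 2 = Y ^ 2 + Z ^ 2 := by linarith
    have hX0 : X ≠ 0 := by
      rintro rfl
      simp only [ne_eq, OfNat.ofNat_ne_zero, not_false_eq_true, zero_pow, mul_zero] at heq'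
      have hY : Y = 0 := by nlinarith [sq_nonneg Y, sq_nonneg Z]
      have hZ : Z = 0 := by nlinarith [sq_nonneg Y, sq_nonneg Z]
      exact hnz ⟨rfl, hY, hZ⟩
    apply (aux_isSquare_neg_one_iff hsf).mpr
    intro q hq hd hq3
    exact aux_descent hq hq3 hd hsf X.natAbs X Y Z rfl hX0 heq'
  · intro h
    obtain ⟨x, y, hxy⟩ := Nat.eq_sq_add_sq_of_isSquare_mod_neg_one h
    exact ⟨1, (x : ℤ), (y : ℤ), fun h => one_ne_zero h.1, by push_cast [hxy]; ring⟩
end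

section
/- (Legendre) Let a, b, c be three integers, not all of the same sign, such that the product abc is squarefree. Then the equation aX² + bY² + cZ² = 0 has a solution in integers (X,Y,Z) ≠ (0,0,0) if and only if −bc is a quadratic residue modulo |a|, −ca is a quadratic residue modulo |b|, and −ab is a quadratic residue modulo |c|. -/
lemma int_crt {p n : ℕ} (hc : Nat.Coprime p n) (x₁ x₂ : ℤ) :
    ∃ x : ℤ, x ≡ x₁ [ZMOD (p:ℤ)] ∧ x ≡ x₂ [ZMOD (n:ℤ)] := by
  obtain ⟨u, v, huv⟩ := Nat.isCoprime_iff_coprime.mpr hc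
  refine ⟨x₂*(u*p) + x₁*(v*n), ?_, ?_⟩
  · exact Int.modEq_iff_dvd.mpr ⟨u*(x₁-x₂), by linear_combination (-x₁)*huv⟩
  · exact Int.modEq_iff_dvd.mpr ⟨v*(x₂-x₁), by linear_combination (-x₂)*huv⟩

lemma coprime_of_sf_mul {p n : ℕ} (hp : p.Prime) (hsf : Squarefree (p*n)) : p.Coprime n := by
  rw [hp.coprime_iff_not_dvd]
  intro hd
  exact hp.not_isUnit (hsf p (mul_dvd_mul_left p hd))

lemma qr_glue (r : ℤ) : ∀ m : ℕ, Squarefree m →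
    (∀ p : ℕ, p.Prime → p ∣ m → ∃ x : ℤ, x ^ 2 ≡ r [ZMOD (p:ℤ)]) →
    ∃ x : ℤ, x ^ 2 ≡ r [ZMOD (m:ℤ)] := by
  refine induction_on_primes ?_ ?_ ?_
  · intro h _; exact absurd h not_squarefree_zero
  · intro _ _; exact ⟨0, by simpa using Int.modEq_one⟩
  · intro p n hp ih hsf hall
    have hc : p.Coprime n := coprime_of_sf_mul hp hsf
    obtain ⟨x₁, h₁⟩ := hall p hp (dvd_mul_right _ _)
    obtain ⟨x₂, h₂⟩ := ih hsf.of_mul_right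
      (fun q hq hd => hall q hq (hd.mul_left p))
    obtain ⟨x, hxp, hxn⟩ := int_crt hc x₁ x₂
    refine ⟨x, ?_⟩
    have hcast : ((p*n : ℕ) : ℤ) = (p:ℤ)*(n:ℤ) := by push_cast; ring
    rw [hcast]
    refine (Int.modEq_and_modEq_iff_modEq_mul ?_).mp
      ⟨(hxp.pow 2).trans h₁, (hxn.pow 2).trans h₂⟩
    simpa using hc

lemma lin_glue (f : ℤ → ℤ → ℤ → ℤ) : ∀ m : ℕ, Squarefree m →
    (∀ p : ℕ, p.Prime → p ∣ m → ∃ α β γ : ℤ, ∀ x y z : ℤ,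
      (p:ℤ) ∣ (α*x + β*y + γ*z) → (p:ℤ) ∣ f x y z) →
    ∃ α β γ : ℤ, ∀ x y z : ℤ, (m:ℤ) ∣ (α*x + β*y + γ*z) → (m:ℤ) ∣ f x y z := by
  refine induction_on_primes ?_ ?_ ?_
  · intro h _; exact absurd h not_squarefree_zero
  · intro _ _; exact ⟨0, 0, 0, fun x y z _ => by simpa using one_dvd _⟩
  · intro p n hp ih hsf hall
    have hc : p.Coprime n := coprime_of_sf_mul hp hsf
    obtain ⟨α₁, β₁, γ₁, h₁⟩ := hall p hp (dvd_mul_right _ _)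
    obtain ⟨α₂, β₂, γ₂, h₂⟩ := ih hsf.of_mul_right
      (fun q hq hd => hall q hq (hd.mul_left p))
    obtain ⟨α, hαp, hαn⟩ := int_crt hc α₁ α₂
    obtain ⟨β, hβp, hβn⟩ := int_crt hc β₁ β₂
    obtain ⟨γ, hγp, hγn⟩ := int_crt hc γ₁ γ₂
    refine ⟨α, β, γ, fun x y z hL => ?_⟩
    have hcast : ((p*n : ℕ) : ℤ) = (p:ℤ)*(n:ℤ) := by push_cast; ring
    rw [hcast] at hL ⊢
    have hdp : (p:ℤ) ∣ α*x + β*y + γ*z := dvd_trans (dvd_mul_right _ _) hL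
    have hdn : (n:ℤ) ∣ α*x + β*y + γ*z := dvd_trans (dvd_mul_left _ _) hL
    have key : ∀ (q : ℤ) (α' β' γ' : ℤ), α ≡ α' [ZMOD q] → β ≡ β' [ZMOD q] → γ ≡ γ' [ZMOD q] →
        q ∣ α*x + β*y + γ*z → q ∣ α'*x + β'*y + γ'*z := by
      intro q α' β' γ' h1 h2 h3 hd
      obtain ⟨u1, hu1⟩ := Int.modEq_iff_dvd.mp h1
      obtain ⟨u2, hu2⟩ := Int.modEq_iff_dvd.mp h2
      obtain ⟨u3, hu3⟩ := Int.modEq_iff_dvd.mp h3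
      obtain ⟨w, hw⟩ := hd
      exact ⟨w + (u1*x + u2*y + u3*z), by linear_combination hw + x*hu1 + y*hu2 + z*hu3⟩
    have hfp : (p:ℤ) ∣ f x y z := h₁ x y z (key _ _ _ _ hαp hβp hγp hdp)
    have hfn : (n:ℤ) ∣ f x y z := h₂ x y z (key _ _ _ _ hαn hβn hγn hdn)
    exact (Int.isCoprime_iff_gcd_eq_one.mpr (by simpa using hc)).mul_dvd hfp hfn

lemma sf_not_dvd {a b : ℤ} (hsf : Squarefree (a*b)) {q : ℤ} (hq : Prime q) (hqa : q ∣ a) :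
    ¬ q ∣ b := fun h => hq.not_unit (hsf q (mul_dvd_mul hqa h))

lemma lin_form_of_qr {p : ℕ} (hp : p.Prime) {a b c t : ℤ} (hpa : (p:ℤ) ∣ a)
    (hpb : ¬ (p:ℤ) ∣ b) (ht : t^2 ≡ -(b*c) [ZMOD (p:ℤ)]) :
    ∀ x y z : ℤ, (p:ℤ) ∣ (0*x + b*y + (-t)*z) → (p:ℤ) ∣ a*x^2 + b*y^2 + c*z^2 := by
  intro x y z hL
  have hpz : Prime (p:ℤ) := Nat.prime_iff_prime_int.mp hp
  obtain ⟨k, hk⟩ := Int.modEq_iff_dvd.mp ht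
  have hdvd : (p:ℤ) ∣ b*(b*y^2 + c*z^2) := by
    obtain ⟨w, hw⟩ := hL
    exact ⟨w*(b*y + t*z) - k*z^2, by linear_combination (b*y+t*z)*hw - z^2*hk⟩
  have h2 : (p:ℤ) ∣ b*y^2 + c*z^2 := (hpz.dvd_mul.mp hdvd).resolve_left hpb
  obtain ⟨a', ha'⟩ := hpa
  obtain ⟨w, hw⟩ := h2
  exact ⟨a'*x^2 + w, by linear_combination x^2*ha' + hw⟩

lemma fwd_prime {p : ℕ} (hp : p.Prime) {a b c X Y Z : ℤ}
    (hpa : (p:ℤ) ∣ a) (hpb : ¬ (p:ℤ) ∣ b) (hpc : ¬ (p:ℤ) ∣ c)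
    (hsfa : Squarefree a)
    (heq : a*X^2 + b*Y^2 + c*Z^2 = 0)
    (hprim : ¬((p:ℤ) ∣ X ∧ (p:ℤ) ∣ Y ∧ (p:ℤ) ∣ Z)) :
    ∃ t : ℤ, t^2 ≡ -(b*c) [ZMOD (p:ℤ)] := by
  haveI : Fact p.Prime := ⟨hp⟩
  have hpz : Prime (p:ℤ) := Nat.prime_iff_prime_int.mp hp
  have ha0 : ((a : ZMod p)) = 0 := (ZMod.intCast_zmod_eq_zero_iff_dvd a p).mpr hpa
  have hb0 : ((b : ZMod p)) ≠ 0 := fun h => hpb ((ZMod.intCast_zmod_eq_zero_iff_dvd b p).mp h)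
  have heqp : (b : ZMod p)*(Y:ZMod p)^2 + (c:ZMod p)*(Z:ZMod p)^2 = 0 := by
    have : ((a*X^2 + b*Y^2 + c*Z^2 : ℤ) : ZMod p) = 0 := by rw [heq]; simp
    push_cast at this
    rw [ha0] at this; linear_combination this
  have hZ : (Z : ZMod p) ≠ 0 := by
    intro hZ0
    have hY0 : (Y : ZMod p) = 0 := by
      have : (b : ZMod p)*(Y:ZMod p)^2 = 0 := by rw [hZ0] at heqp; linear_combination heqp
      rcases mul_eq_zero.mp this with h | h
      · exact absurd h hb0
      · exact pow_eq_zero_iff two_ne_zero |>.mp h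
    have hpY : (p:ℤ) ∣ Y := (ZMod.intCast_zmod_eq_zero_iff_dvd Y p).mp hY0
    have hpZ : (p:ℤ) ∣ Z := (ZMod.intCast_zmod_eq_zero_iff_dvd Z p).mp hZ0
    have hpX : ¬ (p:ℤ) ∣ X := fun h => hprim ⟨h, hpY, hpZ⟩
    -- p^2 ∣ a X^2 hence p^2 ∣ a, contradiction with squarefree a
    obtain ⟨y', hy'⟩ := hpY
    obtain ⟨z', hz'⟩ := hpZ
    obtain ⟨a', ha'⟩ := hpa
    rw [ha', hy', hz'] at heq
    have key : (p:ℤ)*(a'*X^2) = (p:ℤ)*((p:ℤ)*(-(b*y'^2 + c*z'^2))) := by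
      linear_combination heq
    have hp0 : (p:ℤ) ≠ 0 := by exact_mod_cast hp.ne_zero
    have key2 : a'*X^2 = (p:ℤ)*(-(b*y'^2 + c*z'^2)) := by
      exact mul_left_cancel₀ hp0 key
    have : (p:ℤ) ∣ a' := by
      have : (p:ℤ) ∣ a' * X^2 := ⟨_, key2⟩
      rcases hpz.dvd_mul.mp this with h | h
      · exact h
      · exact absurd (hpz.dvd_of_dvd_pow h) hpX
    obtain ⟨a'', ha''⟩ := this
    exact hpz.not_unit (hsfa (p:ℤ) ⟨a'', by rw [ha', ha'']; ring⟩)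
  obtain ⟨t, ht⟩ := ZMod.intCast_surjective ((b:ZMod p)*(Y:ZMod p)*(Z:ZMod p)⁻¹)
  refine ⟨t, (ZMod.intCast_eq_intCast_iff _ _ _).mp ?_⟩
  push_cast
  rw [ht]
  field_simp
  linear_combination heqp

lemma forward_slot (a b c : ℤ) (hsf : Squarefree (a*b*c))
    (hsol : ∃ X Y Z : ℤ, ¬(X = 0 ∧ Y = 0 ∧ Z = 0) ∧ a*X^2 + b*Y^2 + c*Z^2 = 0) :
    ∃ x : ℤ, x^2 ≡ -(b*c) [ZMOD |a|] := by
  obtain ⟨X, Y, Z, hne, heq⟩ := hsol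
  set g : ℕ := Int.gcd X (Int.gcd Y Z) with hg
  have hg0 : g ≠ 0 := by
    intro h
    rw [hg, Int.gcd_eq_zero_iff] at h
    obtain ⟨h1, h2⟩ := h
    rw [Int.natCast_eq_zero, Int.gcd_eq_zero_iff] at h2
    exact hne ⟨h1, h2.1, h2.2⟩
  have hdX : (g:ℤ) ∣ X := Int.gcd_dvd_left _ _
  have hdY : (g:ℤ) ∣ Y := dvd_trans (Int.gcd_dvd_right _ _) (Int.gcd_dvd_left _ _)
  have hdZ : (g:ℤ) ∣ Z := dvd_trans (Int.gcd_dvd_right _ _) (Int.gcd_dvd_right _ _)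
  obtain ⟨X₁, hX₁⟩ := hdX
  obtain ⟨Y₁, hY₁⟩ := hdY
  obtain ⟨Z₁, hZ₁⟩ := hdZ
  have hgz : ((g:ℤ)) ≠ 0 := Int.natCast_ne_zero.mpr hg0
  have heq₁ : a*X₁^2 + b*Y₁^2 + c*Z₁^2 = 0 := by
    have : (g:ℤ)^2 * (a*X₁^2 + b*Y₁^2 + c*Z₁^2) = 0 := by
      rw [hX₁, hY₁, hZ₁] at heq; linear_combination heq
    exact (mul_eq_zero.mp this).resolve_left (pow_ne_zero 2 hgz)
  have hprim : Int.gcd X₁ (Int.gcd Y₁ Z₁) = 1 := by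
    have h1 : Int.gcd Y Z = g * Int.gcd Y₁ Z₁ := by
      rw [hY₁, hZ₁, Int.gcd_mul_left]; simp
    have h2 : g = g * Int.gcd X₁ (Int.gcd Y₁ Z₁) := by
      conv_lhs => rw [hg]
      rw [hX₁, h1]
      push_cast
      rw [Int.gcd_mul_left]
      simp
    exact (Nat.eq_of_mul_eq_mul_left (Nat.pos_of_ne_zero hg0) (by rw [← h2, mul_one])).symm
  have hsfa : Squarefree a := hsf.of_mul_left.of_mul_left
  have hsfna : Squarefree a.natAbs := Int.squarefree_natAbs.mpr hsfa
  have hprimes : ∀ p : ℕ, p.Prime → p ∣ a.natAbs → ∃ x : ℤ, x ^ 2 ≡ -(b*c) [ZMOD (p:ℤ)] := by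
    intro p hp hpd
    have hpa : (p:ℤ) ∣ a := dvd_trans (Int.natCast_dvd_natCast.mpr hpd) (Int.natAbs_dvd.mpr dvd_rfl)
    have hpz : Prime (p:ℤ) := Nat.prime_iff_prime_int.mp hp
    have hpb : ¬ (p:ℤ) ∣ b := fun h => hpz.not_unit
      (hsf (p:ℤ) (dvd_trans (mul_dvd_mul hpa h) ⟨c, by ring⟩))
    have hpc : ¬ (p:ℤ) ∣ c := fun h => hpz.not_unit
      (hsf (p:ℤ) (dvd_trans (mul_dvd_mul hpa h) ⟨b, by ring⟩))
    refine fwd_prime hp hpa hpb hpc hsfa heq₁ ?_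
    rintro ⟨h1, h2, h3⟩
    have hin : (p:ℤ) ∣ ((Int.gcd Y₁ Z₁ : ℕ) : ℤ) := by exact_mod_cast Int.dvd_gcd h2 h3
    have hout : (p:ℤ) ∣ ((Int.gcd X₁ (Int.gcd Y₁ Z₁) : ℕ) : ℤ) := by exact_mod_cast Int.dvd_gcd h1 hin
    rw [hprim] at hout
    exact hpz.not_unit (isUnit_of_dvd_one (by exact_mod_cast hout))
  obtain ⟨x, hx⟩ := qr_glue (-(b*c)) a.natAbs hsfna hprimes
  exact ⟨x, by rwa [Int.abs_eq_natAbs]⟩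

lemma sq_eq_one_of_sf {e d : ℤ} (hsf : Squarefree e) (h : d*d ∣ e) : d^2 = 1 := by
  rcases Int.isUnit_iff.mp (hsf d h) with h1 | h1 <;> rw [h1] <;> ring

lemma backward_core (a b c : ℤ) (ha : 0 < a) (hb : b < 0) (hc : c < 0)
    (hsf : Squarefree (a*b*c))
    (h1 : ∃ x : ℤ, x^2 ≡ -(b*c) [ZMOD |a|])
    (h2 : ∃ y : ℤ, y^2 ≡ -(c*a) [ZMOD |b|])
    (h3 : ∃ z : ℤ, z^2 ≡ -(a*b) [ZMOD |c|]) :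
    ∃ X Y Z : ℤ, ¬(X = 0 ∧ Y = 0 ∧ Z = 0) ∧ a*X^2 + b*Y^2 + c*Z^2 = 0 := by
  have ha0 : a ≠ 0 := ha.ne'
  have hb0 : b ≠ 0 := hb.ne
  have hc0 : c ≠ 0 := hc.ne
  -- special degenerate solution generator
  have degen : a = 1 → b = -1 → ∃ X Y Z : ℤ, ¬(X = 0 ∧ Y = 0 ∧ Z = 0) ∧
      a*X^2 + b*Y^2 + c*Z^2 = 0 := by
    intro h1' h2'
    exact ⟨1, 1, 0, fun h => one_ne_zero h.1, by rw [h1', h2']; ring⟩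
  by_cases hne1 : b = -1 ∧ c = -1
  · -- two squares case
    obtain ⟨hbm, hcm⟩ := hne1
    obtain ⟨x, hx⟩ := h1
    have hx' : x^2 ≡ -1 [ZMOD |a|] := by rwa [hbm, hcm] at hx; 
    have habs : |a| = (a.natAbs : ℤ) := Int.abs_eq_natAbs a
    rw [habs] at hx'
    have hsq : IsSquare (-1 : ZMod a.natAbs) := by
      refine ⟨(x : ZMod a.natAbs), ?_⟩
      have := (ZMod.intCast_eq_intCast_iff _ _ _).mpr hx'
      push_cast at this
      rw [← this]; ring
    obtain ⟨u, v, huv⟩ := Nat.eq_sq_add_sq_of_isSquare_mod_neg_one hsq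
    refine ⟨1, u, v, fun h => one_ne_zero h.1, ?_⟩
    have hA : (a.natAbs : ℤ) = a := Int.natAbs_of_nonneg ha.le
    rw [hbm, hcm]
    have := congrArg (fun n : ℕ => (n : ℤ)) huv
    push_cast at this
    rw [abs_of_pos ha] at this
    linear_combination this
  -- main case
  have habc : 0 < a*b*c := by nlinarith [mul_pos_of_neg_of_neg hb hc]
  set m : ℕ := (a*b*c).natAbs with hm
  have hM : (m:ℤ) = a*b*c := by rw [hm]; exact Int.natAbs_of_nonneg habc.le
  have hm0 : m ≠ 0 := by
    intro h; rw [h] at hM; exact habc.ne (by exact_mod_cast hM)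
  have hsfm : Squarefree m := Int.squarefree_natAbs.mpr hsf
  -- squarefree divisors
  have hsfbc : Squarefree (b*c) := hsf.squarefree_of_dvd ⟨a, by ring⟩
  have hsfca : Squarefree (c*a) := hsf.squarefree_of_dvd ⟨b, by ring⟩
  have hsfab : Squarefree (a*b) := hsf.squarefree_of_dvd ⟨c, by ring⟩
  -- global linear form
  have hforms : ∀ p : ℕ, p.Prime → p ∣ m → ∃ α β γ : ℤ, ∀ x y z : ℤ,
      (p:ℤ) ∣ (α*x + β*y + γ*z) → (p:ℤ) ∣ a*x^2 + b*y^2 + c*z^2 := by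
    intro p hp hpd
    have hpz : Prime (p:ℤ) := Nat.prime_iff_prime_int.mp hp
    have hpdvd : (p:ℤ) ∣ a*b*c := by
      rw [← hM]; exact_mod_cast Int.natCast_dvd_natCast.mpr hpd
    have notdvd : ∀ u v : ℤ, (p:ℤ) ∣ u → Squarefree (u*v) → ¬ (p:ℤ) ∣ v := by
      intro u v hu hsfuv hv
      exact hpz.not_unit (hsfuv (p:ℤ) (mul_dvd_mul hu hv))
    rcases hpz.dvd_mul.mp hpdvd with hab' | hpc'
    · rcases hpz.dvd_mul.mp hab' with hpa' | hpb'
      · -- p ∣ a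
        obtain ⟨t, ht⟩ := h1
        rw [Int.abs_eq_natAbs] at ht
        have htp : t^2 ≡ -(b*c) [ZMOD (p:ℤ)] := ht.of_dvd (Int.dvd_natAbs.mpr hpa')
        exact ⟨0, b, -t, lin_form_of_qr hp hpa' (notdvd a b hpa' hsfab) htp⟩
      · -- p ∣ b
        obtain ⟨t, ht⟩ := h2
        rw [Int.abs_eq_natAbs] at ht
        have htp : t^2 ≡ -(c*a) [ZMOD (p:ℤ)] := ht.of_dvd (Int.dvd_natAbs.mpr hpb')
        refine ⟨-t, 0, c, fun x y z hd => ?_⟩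
        have hres := lin_form_of_qr hp hpb' (notdvd b c hpb' hsfbc) htp y z x
          (by rw [show (0:ℤ)*y + c*z + -t*x = -t*x + 0*y + c*z from by ring]; exact hd)
        rw [show b*y^2 + c*z^2 + a*x^2 = a*x^2 + b*y^2 + c*z^2 from by ring] at hres
        exact hres
    · -- p ∣ c
      obtain ⟨t, ht⟩ := h3
      rw [Int.abs_eq_natAbs] at ht
      have htp : t^2 ≡ -(a*b) [ZMOD (p:ℤ)] := ht.of_dvd (Int.dvd_natAbs.mpr hpc')
      have hpcb : ¬ (p:ℤ) ∣ a := notdvd c a hpc' hsfca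
      refine ⟨a, -t, 0, fun x y z hd => ?_⟩
      have hres := lin_form_of_qr hp hpc' hpcb htp z x y
        (by rw [show (0:ℤ)*z + a*x + -t*y = a*x + -t*y + 0*z from by ring]; exact hd)
      rw [show c*z^2 + a*x^2 + b*y^2 = a*x^2 + b*y^2 + c*z^2 from by ring] at hres
      exact hres
  obtain ⟨α, β, γ, hL⟩ := lin_glue (fun x y z => a*x^2 + b*y^2 + c*z^2) m hsfm hforms
  -- pigeonhole
  set BC : ℕ := (b*c).toNat with hBC
  set CA : ℕ := (-(c*a)).toNat with hCA
  set AB : ℕ := (-(a*b)).toNat with hAB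
  have hBCz : (BC:ℤ) = b*c := Int.toNat_of_nonneg (by nlinarith)
  have hCAz : (CA:ℤ) = -(c*a) := Int.toNat_of_nonneg (by nlinarith)
  have hABz : (AB:ℤ) = -(a*b) := Int.toNat_of_nonneg (by nlinarith)
  set nx : ℕ := Nat.sqrt BC
  set ny : ℕ := Nat.sqrt CA
  set nz : ℕ := Nat.sqrt AB
  have hmsq : BC * CA * AB = m * m := by
    have : ((BC * CA * AB : ℕ) : ℤ) = ((m*m : ℕ) : ℤ) := by
      push_cast
      rw [hBCz, hCAz, hABz, hM]; ring
    exact_mod_cast this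
  have hcard : m < (nx+1) * ((ny+1) * (nz+1)) := by
    have h1' : BC < (nx+1)*(nx+1) := Nat.lt_succ_sqrt BC
    have h2' : CA < (ny+1)*(ny+1) := Nat.lt_succ_sqrt CA
    have h3' : AB < (nz+1)*(nz+1) := Nat.lt_succ_sqrt AB
    by_contra hcon
    push_neg at hcon
    have hQ : m*m < ((nx+1)*((ny+1)*(nz+1))) * ((nx+1)*((ny+1)*(nz+1))) := by
      calc m*m = BC*CA*AB := hmsq.symm
        _ < ((nx+1)*(nx+1)) * ((ny+1)*(ny+1)) * ((nz+1)*(nz+1)) :=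
            Nat.mul_lt_mul'' (Nat.mul_lt_mul'' h1' h2') h3'
        _ = ((nx+1)*((ny+1)*(nz+1))) * ((nx+1)*((ny+1)*(nz+1))) := by ring
    exact absurd hQ (not_lt.mpr (Nat.mul_le_mul hcon hcon))
  haveI : NeZero m := ⟨hm0⟩
  obtain ⟨v, hv, w, hw, hvw, hFvw⟩ :=
    Finset.exists_ne_map_eq_of_card_lt_of_maps_to
      (s := Finset.range (nx+1) ×ˢ Finset.range (ny+1) ×ˢ Finset.range (nz+1))
      (t := (Finset.univ : Finset (ZMod m)))
      (by
        rw [Finset.card_product, Finset.card_product, Finset.card_range,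
          Finset.card_range, Finset.card_range, Finset.card_univ, ZMod.card]
        exact hcard)
      (fun x _ => Finset.mem_univ _)
      (f := fun v : ℕ × ℕ × ℕ => ((α*v.1 + β*v.2.1 + γ*v.2.2 : ℤ) : ZMod m))
  simp only [Finset.mem_product, Finset.mem_range] at hv hw
  set dx : ℤ := (v.1:ℤ) - w.1 with hdx
  set dy : ℤ := (v.2.1:ℤ) - w.2.1 with hdy
  set dz : ℤ := (v.2.2:ℤ) - w.2.2 with hdz
  have hdvdL : (m:ℤ) ∣ α*dx + β*dy + γ*dz := by
    have := (ZMod.intCast_eq_intCast_iff _ _ _).mp hFvw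
    obtain ⟨k, hk⟩ := Int.modEq_iff_dvd.mp this
    exact ⟨-k, by rw [hdx, hdy, hdz]; linear_combination -hk⟩
  have hdvdf : (m:ℤ) ∣ a*dx^2 + b*dy^2 + c*dz^2 := hL dx dy dz hdvdL
  -- bounds
  have boundx : dx^2 ≤ (BC:ℤ) := by
    have h1' : (v.1:ℤ) ≤ nx := by exact_mod_cast Nat.lt_succ_iff.mp hv.1
    have h2' : (w.1:ℤ) ≤ nx := by exact_mod_cast Nat.lt_succ_iff.mp hw.1
    have hs : (nx:ℤ)^2 ≤ BC := by exact_mod_cast Nat.sqrt_le' BC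
    have : dx^2 ≤ (nx:ℤ)^2 := sq_le_sq' (by rw [hdx]; linarith) (by rw [hdx]; linarith)
    linarith
  have boundy : dy^2 ≤ (CA:ℤ) := by
    have h1' : (v.2.1:ℤ) ≤ ny := by exact_mod_cast Nat.lt_succ_iff.mp hv.2.1
    have h2' : (w.2.1:ℤ) ≤ ny := by exact_mod_cast Nat.lt_succ_iff.mp hw.2.1
    have hs : (ny:ℤ)^2 ≤ CA := by exact_mod_cast Nat.sqrt_le' CA
    have : dy^2 ≤ (ny:ℤ)^2 := sq_le_sq' (by rw [hdy]; linarith) (by rw [hdy]; linarith)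
    linarith
  have boundz : dz^2 ≤ (AB:ℤ) := by
    have h1' : (v.2.2:ℤ) ≤ nz := by exact_mod_cast Nat.lt_succ_iff.mp hv.2.2
    have h2' : (w.2.2:ℤ) ≤ nz := by exact_mod_cast Nat.lt_succ_iff.mp hw.2.2
    have hs : (nz:ℤ)^2 ≤ AB := by exact_mod_cast Nat.sqrt_le' AB
    have : dz^2 ≤ (nz:ℤ)^2 := sq_le_sq' (by rw [hdz]; linarith) (by rw [hdz]; linarith)
    linarith
  rw [hBCz] at boundx
  rw [hCAz] at boundy
  rw [hABz] at boundz
  obtain ⟨k, hk⟩ := hdvdf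
  rw [hM] at hk
  have ta : 0 ≤ a*dx^2 := by positivity
  have tb : b*dy^2 ≤ 0 := mul_nonpos_iff.mpr (Or.inr ⟨hb.le, sq_nonneg dy⟩)
  have tc : c*dz^2 ≤ 0 := mul_nonpos_iff.mpr (Or.inr ⟨hc.le, sq_nonneg dz⟩)
  have t1 : a*dx^2 ≤ a*b*c := by
    have := mul_le_mul_of_nonneg_left boundx ha.le
    linarith
  have t2 : -(a*b*c) ≤ b*dy^2 := by
    have := mul_le_mul_of_nonpos_left boundy hb.le
    linarith
  have t3 : -(a*b*c) ≤ c*dz^2 := by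
    have := mul_le_mul_of_nonpos_left boundz hc.le
    linarith
  have hk1 : k ≤ 1 := by
    have : a*b*c*k ≤ a*b*c*1 := by rw [← hk]; linarith
    exact le_of_mul_le_mul_left this habc
  have hk2 : -2 ≤ k := by
    have : a*b*c*(-2) ≤ a*b*c*k := by rw [← hk]; linarith
    exact le_of_mul_le_mul_left this habc
  interval_cases k
  · -- k = -2 : impossible
    exfalso
    have hbdy : b*dy^2 = -(a*b*c) := by linarith
    have hcdz : c*dz^2 = -(a*b*c) := by linarith
    have hdy2 : dy^2 = -(c*a) := mul_left_cancel₀ hb0 (by linear_combination hbdy)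
    have hdz2 : dz^2 = -(a*b) := mul_left_cancel₀ hc0 (by linear_combination hcdz)
    have h1u : dy^2 = 1 := sq_eq_one_of_sf hsfca ⟨-1, by linear_combination hdy2⟩
    have h2u : dz^2 = 1 := sq_eq_one_of_sf hsfab ⟨-1, by linear_combination hdz2⟩
    have hca1 : c*(-a) = 1 := by linear_combination -hdy2 + h1u
    have hab1 : a*(-b) = 1 := by linear_combination -hdz2 + h2u
    rcases Int.mul_eq_one_iff_eq_one_or_neg_one.mp hca1 with ⟨h', _⟩ | ⟨hcc, haa⟩
    · exact absurd h' (by linarith)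
    have ha1 : a = 1 := by linarith
    have hb1 : b = -1 := by
      rw [ha1] at hab1
      linarith [hab1]
    exact hne1 ⟨hb1, by linarith⟩
  · -- k = -1 : use the identity
    by_cases hZ0 : dz^2 + a*b = 0
    · -- then a = 1, b = -1, degenerate solution
      have hdz1 : dz^2 = 1 := sq_eq_one_of_sf hsfab ⟨-1, by linear_combination hZ0⟩
      have hab1 : a*(-b) = 1 := by linear_combination -hZ0 + hdz1
      rcases Int.mul_eq_one_iff_eq_one_or_neg_one.mp hab1 with ⟨ha1, hb1⟩ | ⟨ha1, _⟩
      · exact degen ha1 (by linarith)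
      · exact absurd ha1 (by linarith)
    · refine ⟨dx*dz + b*dy, dy*dz - a*dx, dz^2 + a*b, fun h => hZ0 h.2.2, ?_⟩
      linear_combination (dz^2 + a*b) * hk
  · -- k = 0 : direct solution
    refine ⟨dx, dy, dz, ?_, by linarith⟩
    rintro ⟨e1, e2, e3⟩
    apply hvw
    have e1' : v.1 = w.1 := by
      have : (v.1:ℤ) = w.1 := by rw [hdx] at e1; linarith
      exact_mod_cast this
    have e2' : v.2.1 = w.2.1 := by
      have : (v.2.1:ℤ) = w.2.1 := by rw [hdy] at e2; linarith
      exact_mod_cast this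
    have e3' : v.2.2 = w.2.2 := by
      have : (v.2.2:ℤ) = w.2.2 := by rw [hdz] at e3; linarith
      exact_mod_cast this
    exact Prod.ext e1' (Prod.ext e2' e3')
  · -- k = 1 : impossible
    exfalso
    have hax : a*dx^2 = a*b*c := by linarith
    have hdx2 : dx^2 = b*c := mul_left_cancel₀ ha0 (by linear_combination hax)
    have h1u : dx^2 = 1 := sq_eq_one_of_sf hsfbc ⟨1, by linear_combination -hdx2⟩
    have hbc1 : b*c = 1 := by linear_combination -hdx2 + h1u
    rcases Int.mul_eq_one_iff_eq_one_or_neg_one.mp hbc1 with ⟨h', _⟩ | ⟨hbb, hcc⟩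
    · exact absurd h' (by linarith)
    exact hne1 ⟨hbb, hcc⟩

/-- (Legendre) Let `a, b, c` be integers, not all of the same sign, with `abc` squarefree.
Then `aX² + bY² + cZ² = 0` has a nonzero integer solution if and only if `−bc`, `−ca`, `−ab`
are quadratic residues modulo `|a|`, `|b|`, `|c|` respectively. -/
theorem legendre_ternary_quadratic (a b c : ℤ)
    (hsign : ¬((0 < a ∧ 0 < b ∧ 0 < c) ∨ (a < 0 ∧ b < 0 ∧ c < 0)))
    (hsf : Squarefree (a * b * c)) :
    (∃ X Y Z : ℤ, ¬(X = 0 ∧ Y = 0 ∧ Z = 0) ∧ a * X ^ 2 + b * Y ^ 2 + c * Z ^ 2 = 0) ↔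
      ((∃ x : ℤ, x ^ 2 ≡ -(b * c) [ZMOD |a|]) ∧
        (∃ y : ℤ, y ^ 2 ≡ -(c * a) [ZMOD |b|]) ∧
        (∃ z : ℤ, z ^ 2 ≡ -(a * b) [ZMOD |c|])) := by
  have habc0 : a * b * c ≠ 0 := hsf.ne_zero
  have ha0 : a ≠ 0 := fun h => habc0 (by rw [h]; ring)
  have hb0 : b ≠ 0 := fun h => habc0 (by rw [h]; ring)
  have hc0 : c ≠ 0 := fun h => habc0 (by rw [h]; ring)
  constructor
  · rintro ⟨X, Y, Z, hnz, heq⟩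
    refine ⟨forward_slot a b c hsf ⟨X, Y, Z, hnz, heq⟩, ?_, ?_⟩
    · exact forward_slot b c a (by rw [show b*c*a = a*b*c from by ring]; exact hsf)
        ⟨Y, Z, X, fun h => hnz ⟨h.2.2, h.1, h.2.1⟩, by linear_combination heq⟩
    · exact forward_slot c a b (by rw [show c*a*b = a*b*c from by ring]; exact hsf)
        ⟨Z, X, Y, fun h => hnz ⟨h.2.1, h.2.2, h.1⟩, by linear_combination heq⟩
  · rintro ⟨h1, h2, h3⟩
    rcases lt_or_gt_of_ne ha0 with ha | ha <;>
      rcases lt_or_gt_of_ne hb0 with hb | hb <;>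
        rcases lt_or_gt_of_ne hc0 with hc | hc
    · exact absurd (Or.inr ⟨ha, hb, hc⟩) hsign
    · -- (-,-,+) : core c a b
      obtain ⟨X, Y, Z, hnz, heq⟩ := backward_core c a b hc ha hb
        (by rw [show c*a*b = a*b*c from by ring]; exact hsf)
        h3 h1 h2
      exact ⟨Y, Z, X, fun h => hnz ⟨h.2.2, h.1, h.2.1⟩, by linear_combination heq⟩
    · -- (-,+,-) : core b a c
      obtain ⟨X, Y, Z, hnz, heq⟩ := backward_core b a c hb ha hc
        (by rw [show b*a*c = a*b*c from by ring]; exact hsf)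
        (h2.imp (fun y hy => by rwa [mul_comm c a] at hy))
        (h1.imp (fun x hx => by rwa [mul_comm b c] at hx))
        (h3.imp (fun z hz => by rwa [mul_comm a b] at hz))
      exact ⟨Y, X, Z, fun h => hnz ⟨h.2.1, h.1, h.2.2⟩, by linear_combination heq⟩
    · -- (-,+,+) : core (-a) (-b) (-c)
      obtain ⟨X, Y, Z, hnz, heq⟩ := backward_core (-a) (-b) (-c)
        (by linarith) (by linarith) (by linarith)
        (hsf.squarefree_of_dvd ⟨-1, by ring⟩)
        (h1.imp (fun x hx => by rw [show -(-b*-c) = -(b*c) from by ring, abs_neg]; exact hx))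
        (h2.imp (fun y hy => by rw [show -(-c*-a) = -(c*a) from by ring, abs_neg]; exact hy))
        (h3.imp (fun z hz => by rw [show -(-a*-b) = -(a*b) from by ring, abs_neg]; exact hz))
      exact ⟨X, Y, Z, hnz, by linear_combination -heq⟩
    · -- (+,-,-) : core a b c
      exact backward_core a b c ha hb hc hsf h1 h2 h3
    · -- (+,-,+) : core (-b) (-a) (-c)
      obtain ⟨X, Y, Z, hnz, heq⟩ := backward_core (-b) (-a) (-c)
        (by linarith) (by linarith) (by linarith)
        (hsf.squarefree_of_dvd ⟨-1, by ring⟩)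
        (h2.imp (fun y hy => by rw [show -(-a*-c) = -(c*a) from by ring, abs_neg]; exact hy))
        (h1.imp (fun x hx => by rw [show -(-c*-b) = -(b*c) from by ring, abs_neg]; exact hx))
        (h3.imp (fun z hz => by rw [show -(-b*-a) = -(a*b) from by ring, abs_neg]; exact hz))
      exact ⟨Y, X, Z, fun h => hnz ⟨h.2.1, h.1, h.2.2⟩, by linear_combination -heq⟩
    · -- (+,+,-) : core (-c) (-a) (-b)
      obtain ⟨X, Y, Z, hnz, heq⟩ := backward_core (-c) (-a) (-b)
        (by linarith) (by linarith) (by linarith)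
        (hsf.squarefree_of_dvd ⟨-1, by ring⟩)
        (h3.imp (fun z hz => by rw [show -(-a*-b) = -(a*b) from by ring, abs_neg]; exact hz))
        (h1.imp (fun x hx => by rw [show -(-b*-c) = -(b*c) from by ring, abs_neg]; exact hx))
        (h2.imp (fun y hy => by rw [show -(-c*-a) = -(c*a) from by ring, abs_neg]; exact hy))
      exact ⟨Y, Z, X, fun h => hnz ⟨h.2.2, h.1, h.2.1⟩, by linear_combination -heq⟩
    · exact absurd (Or.inl ⟨ha, hb, hc⟩) hsign
end

section
/- Let K be a field of characteristic zero, let E be an elliptic curve over K, let D ∈ K be a non-square element, let L = K(√D), and let E^D be the quadratic twist of E by D. Then there exist group homomorphisms Ψ : E(L) → E(K) × E^D(K) and Ψ̄ : E(K) × E^D(K) → E(L) such that Ψ̄ ∘ Ψ is multiplication by 2 on E(L) and Ψ ∘ Ψ̄ is multiplication by 2 on each factor of E(K) × E^D(K). Moreover, for every odd positive integer n, there is a group isomorphism E(L)[n] ≅ E(K)[n] × E^D(K)[n]. -/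
open WeierstrassCurve WeierstrassCurve.Affine

/-- The `n`-torsion subgroup `G[n]` of an additive commutative group `G`. -/
def nTorsion (G : Type*) [AddCommGroup G] (n : ℕ) : AddSubgroup G where
  carrier := {P | n • P = 0}
  zero_mem' := by simp
  add_mem' := by
    intro a b ha hb
    simp only [Set.mem_setOf_eq, smul_add] at *
    rw [ha, hb, add_zero]
  neg_mem' := by
    intro a ha
    simp only [Set.mem_setOf_eq, smul_neg] at *
    rw [ha, neg_zero]

set_option linter.unusedSectionVars false

open scoped Classical

local notation:max W:max "⟮" S:max "⟯" => WeierstrassCurve.Affine.Point (WeierstrassCurve.Affine.baseChange W S)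

section Conj

variable {K L : Type*} [Field K] [CharZero K] [Field L] [Algebra K L]
variable {D : K} {s : L}

lemma aux_repr_exists (hs : s ^ 2 = algebraMap K L D)
    (hL : IntermediateField.adjoin K {s} = ⊤) (z : L) :
    ∃ a b : K, z = algebraMap K L a + algebraMap K L b * s := by
  have hint : IsIntegral K s := by
    refine ⟨Polynomial.X ^ 2 - Polynomial.C D, Polynomial.monic_X_pow_sub_C _ two_ne_zero, ?_⟩
    simp [hs]
  have halg : Algebra.adjoin K {s} = ⊤ := by
    have := IntermediateField.adjoin_simple_toSubalgebra_of_isAlgebraic hint.isAlgebraic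
    rw [hL] at this
    exact this.symm.trans (by rfl)
  -- the K-span of {1, s} is a subalgebra
  let S : Subalgebra K L :=
    { carrier := {z | ∃ a b : K, z = algebraMap K L a + algebraMap K L b * s}
      mul_mem' := by
        rintro z w ⟨a, b, rfl⟩ ⟨c, d, rfl⟩
        exact ⟨a * c + b * d * D, a * d + b * c, by
          push_cast [map_add, map_mul]
          linear_combination (algebraMap K L b * algebraMap K L d) * hs⟩
      add_mem' := by
        rintro z w ⟨a, b, rfl⟩ ⟨c, d, rfl⟩
        exact ⟨a + c, b + d, by push_cast [map_add]; ring⟩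
      algebraMap_mem' := fun r => ⟨r, 0, by simp⟩ }
  have hsS : s ∈ S := ⟨0, 1, by simp⟩
  have : Algebra.adjoin K {s} ≤ S := Algebra.adjoin_le (by simpa using hsS)
  rw [halg] at this
  exact this (Algebra.mem_top)

lemma aux_D_ne_zero (hnsq : ¬∃ r : K, r ^ 2 = D) : D ≠ 0 := by
  rintro rfl; exact hnsq ⟨0, by ring⟩

lemma aux_s_ne_zero (hnsq : ¬∃ r : K, r ^ 2 = D) (hs : s ^ 2 = algebraMap K L D) : s ≠ 0 := by
  intro h
  apply aux_D_ne_zero hnsq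
  apply (algebraMap K L).injective
  rw [← hs, h]
  simp

lemma aux_repr_unique (hnsq : ¬∃ r : K, r ^ 2 = D) (hs : s ^ 2 = algebraMap K L D)
    {a b : K} (h : algebraMap K L a + algebraMap K L b * s = 0) : a = 0 ∧ b = 0 := by
  by_cases hb : b = 0
  · subst hb
    simp only [map_zero, zero_mul, add_zero] at h
    exact ⟨(algebraMap K L).injective (by simpa using h), rfl⟩
  · exfalso
    apply hnsq
    refine ⟨-(a / b), ?_⟩
    have hb' : algebraMap K L b ≠ 0 := fun h0 => hb ((algebraMap K L).injective (by simpa using h0))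
    have hsval : s = algebraMap K L (-(a / b)) := by
      rw [map_neg, map_div₀]
      field_simp
      linear_combination h
    apply (algebraMap K L).injective
    rw [map_pow, ← hsval, hs]


/-- first coordinate of `z` w.r.t. the basis `{1, s}`. -/
noncomputable def coA (_hnsq : ¬∃ r : K, r ^ 2 = D) (hs : s ^ 2 = algebraMap K L D)
    (hL : IntermediateField.adjoin K {s} = ⊤) (z : L) : K := (aux_repr_exists hs hL z).choose

/-- second coordinate. -/
noncomputable def coB (_hnsq : ¬∃ r : K, r ^ 2 = D) (hs : s ^ 2 = algebraMap K L D)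
    (hL : IntermediateField.adjoin K {s} = ⊤) (z : L) : K := (aux_repr_exists hs hL z).choose_spec.choose

lemma co_spec (hnsq : ¬∃ r : K, r ^ 2 = D) (hs : s ^ 2 = algebraMap K L D)
    (hL : IntermediateField.adjoin K {s} = ⊤) (z : L) :
    z = algebraMap K L (coA hnsq hs hL z) + algebraMap K L (coB hnsq hs hL z) * s :=
  (aux_repr_exists hs hL z).choose_spec.choose_spec

lemma co_eq (hnsq : ¬∃ r : K, r ^ 2 = D) (hs : s ^ 2 = algebraMap K L D)
    (hL : IntermediateField.adjoin K {s} = ⊤) {z : L} {a b : K} (h : z = algebraMap K L a + algebraMap K L b * s) :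
    coA hnsq hs hL z = a ∧ coB hnsq hs hL z = b := by
  have h2 := co_spec hnsq hs hL z
  have key : algebraMap K L (coA hnsq hs hL z - a) + algebraMap K L (coB hnsq hs hL z - b) * s = 0 := by
    push_cast [map_sub]
    linear_combination h - h2
  obtain ⟨h3, h4⟩ := aux_repr_unique hnsq hs key
  exact ⟨sub_eq_zero.mp h3, sub_eq_zero.mp h4⟩

/-- The conjugation `a + b√D ↦ a - b√D` as a `K`-algebra automorphism of `L`. -/
noncomputable def conj (hnsq : ¬∃ r : K, r ^ 2 = D) (hs : s ^ 2 = algebraMap K L D)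
    (hL : IntermediateField.adjoin K {s} = ⊤) : L →ₐ[K] L where
  toFun z := algebraMap K L (coA hnsq hs hL z) - algebraMap K L (coB hnsq hs hL z) * s
  map_one' := by
    obtain ⟨h1, h2⟩ := co_eq hnsq hs hL (z := 1) (a := 1) (b := 0) (by simp)
    rw [h1, h2]; simp
  map_zero' := by
    obtain ⟨h1, h2⟩ := co_eq hnsq hs hL (z := 0) (a := 0) (b := 0) (by simp)
    rw [h1, h2]; simp
  map_mul' z w := by
    obtain ⟨a, b, hz⟩ := aux_repr_exists hs hL z
    obtain ⟨c, d, hw⟩ := aux_repr_exists hs hL w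
    obtain ⟨h1, h2⟩ := co_eq hnsq hs hL hz
    obtain ⟨h3, h4⟩ := co_eq hnsq hs hL hw
    have hzw : z * w = algebraMap K L (a * c + b * d * D) + algebraMap K L (a * d + b * c) * s := by
      rw [hz, hw]; push_cast [map_add, map_mul]
      linear_combination (algebraMap K L b * algebraMap K L d) * hs
    obtain ⟨h5, h6⟩ := co_eq hnsq hs hL hzw
    rw [h1, h2, h3, h4, h5, h6]
    push_cast [map_add, map_mul]
    linear_combination -(algebraMap K L b * algebraMap K L d) * hs
  map_add' z w := by
    obtain ⟨a, b, hz⟩ := aux_repr_exists hs hL z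
    obtain ⟨c, d, hw⟩ := aux_repr_exists hs hL w
    obtain ⟨h1, h2⟩ := co_eq hnsq hs hL hz
    obtain ⟨h3, h4⟩ := co_eq hnsq hs hL hw
    have hzw : z + w = algebraMap K L (a + c) + algebraMap K L (b + d) * s := by
      rw [hz, hw]; push_cast [map_add]; ring
    obtain ⟨h5, h6⟩ := co_eq hnsq hs hL hzw
    rw [h1, h2, h3, h4, h5, h6]
    push_cast [map_add]; ring
  commutes' r := by
    obtain ⟨h1, h2⟩ := co_eq hnsq hs hL (z := algebraMap K L r) (a := r) (b := 0) (by simp)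
    rw [h1, h2]; simp

lemma conj_apply (hnsq : ¬∃ r : K, r ^ 2 = D) (hs : s ^ 2 = algebraMap K L D)
    (hL : IntermediateField.adjoin K {s} = ⊤) {z : L} {a b : K} (h : z = algebraMap K L a + algebraMap K L b * s) :
    conj hnsq hs hL z = algebraMap K L a - algebraMap K L b * s := by
  obtain ⟨h1, h2⟩ := co_eq hnsq hs hL h
  show algebraMap K L (coA hnsq hs hL z) - algebraMap K L (coB hnsq hs hL z) * s = _
  rw [h1, h2]

lemma conj_s (hnsq : ¬∃ r : K, r ^ 2 = D) (hs : s ^ 2 = algebraMap K L D)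
    (hL : IntermediateField.adjoin K {s} = ⊤) : conj hnsq hs hL s = -s := by
  rw [conj_apply hnsq hs hL (a := 0) (b := 1) (by simp)]; simp

lemma conj_conj (hnsq : ¬∃ r : K, r ^ 2 = D) (hs : s ^ 2 = algebraMap K L D)
    (hL : IntermediateField.adjoin K {s} = ⊤) (z : L) : conj hnsq hs hL (conj hnsq hs hL z) = z := by
  obtain ⟨a, b, hz⟩ := aux_repr_exists hs hL z
  rw [conj_apply hnsq hs hL hz,
    conj_apply hnsq hs hL (a := a) (b := -b) (by push_cast [map_neg]; ring), hz]
  push_cast [map_neg]; ring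

lemma conj_fixed (hnsq : ¬∃ r : K, r ^ 2 = D) (hs : s ^ 2 = algebraMap K L D)
    (hL : IntermediateField.adjoin K {s} = ⊤) {z : L} (h : conj hnsq hs hL z = z) : ∃ a : K, z = algebraMap K L a := by
  obtain ⟨a, b, hz⟩ := aux_repr_exists hs hL z
  rw [conj_apply hnsq hs hL hz, hz] at h
  have hb : algebraMap K L (2 * b) * s = 0 := by
    push_cast [map_mul, map_ofNat]
    linear_combination -h
  rcases mul_eq_zero.mp hb with h0 | h0
  · have : (2 : K) * b = 0 := (algebraMap K L).injective (by simpa using h0)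
    have hb0 : b = 0 := by
      rcases mul_eq_zero.mp this with h' | h'
      · exact absurd h' two_ne_zero
      · exact h'
    exact ⟨a, by rw [hz, hb0]; simp⟩
  · exact absurd h0 (aux_s_ne_zero hnsq hs)

end Conj

section Twist

variable {K L : Type*} [Field K] [CharZero K] [Field L] [Algebra K L]
variable {A B D : K} {s : L}

lemma tw_d_ne_zero (hnsq : ¬∃ r : K, r ^ 2 = D) : algebraMap K L D ≠ 0 :=
  fun h => aux_D_ne_zero hnsq ((algebraMap K L).injective (by simpa using h))

lemma tw_Δ : (⟨0, 0, 0, A * D ^ 2, B * D ^ 3⟩ : WeierstrassCurve K).Δ =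
    D ^ 6 * (⟨0, 0, 0, A, B⟩ : WeierstrassCurve K).Δ := by
  simp only [WeierstrassCurve.Δ, WeierstrassCurve.b₂, WeierstrassCurve.b₄, WeierstrassCurve.b₆,
    WeierstrassCurve.b₈]
  ring

lemma tw_negY (x y : L) :
    ((⟨0, 0, 0, A * D ^ 2, B * D ^ 3⟩ : WeierstrassCurve K).baseChange L).toAffine.negY
      (algebraMap K L D * x) (algebraMap K L D * s * y) =
    algebraMap K L D * s *
      (((⟨0, 0, 0, A, B⟩ : WeierstrassCurve K).baseChange L).toAffine.negY x y) := by
  simp [WeierstrassCurve.Affine.negY, WeierstrassCurve.baseChange, WeierstrassCurve.map]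

lemma tw_equation (hs : s ^ 2 = algebraMap K L D) {x y : L}
    (h : ((⟨0, 0, 0, A, B⟩ : WeierstrassCurve K).baseChange L).toAffine.Equation x y) :
    ((⟨0, 0, 0, A * D ^ 2, B * D ^ 3⟩ : WeierstrassCurve K).baseChange L).toAffine.Equation
      (algebraMap K L D * x) (algebraMap K L D * s * y) := by
  rw [WeierstrassCurve.Affine.equation_iff] at h ⊢
  simp only [WeierstrassCurve.baseChange, WeierstrassCurve.map, map_mul, map_pow, map_zero,
    map_add] at h ⊢
  linear_combination (algebraMap K L D) ^ 3 * h +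
    (algebraMap K L D) ^ 2 * y ^ 2 * hs

lemma tw_equation' (hnsq : ¬∃ r : K, r ^ 2 = D) (hs : s ^ 2 = algebraMap K L D) {x y : L}
    (h : ((⟨0, 0, 0, A * D ^ 2, B * D ^ 3⟩ : WeierstrassCurve K).baseChange L).toAffine.Equation
      (algebraMap K L D * x) (algebraMap K L D * s * y)) :
    ((⟨0, 0, 0, A, B⟩ : WeierstrassCurve K).baseChange L).toAffine.Equation x y := by
  have hd := tw_d_ne_zero (L := L) hnsq
  rw [WeierstrassCurve.Affine.equation_iff] at h ⊢
  simp only [WeierstrassCurve.baseChange, WeierstrassCurve.map, map_mul, map_pow, map_zero,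
    map_add] at h ⊢
  have key : (algebraMap K L D) ^ 3 * (y ^ 2 - (x ^ 3 + algebraMap K L A * x + algebraMap K L B))
      = 0 := by
    linear_combination h - (algebraMap K L D) ^ 2 * y ^ 2 * hs
  have := (mul_eq_zero.mp key).resolve_left (pow_ne_zero 3 hd)
  linear_combination this

lemma tw_nonsingular (hnsq : ¬∃ r : K, r ^ 2 = D) (hs : s ^ 2 = algebraMap K L D)
    (hΔ : (⟨0, 0, 0, A, B⟩ : WeierstrassCurve K).Δ ≠ 0) {x y : L} :
    ((⟨0, 0, 0, A * D ^ 2, B * D ^ 3⟩ : WeierstrassCurve K).baseChange L).toAffine.Nonsingular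
      (algebraMap K L D * x) (algebraMap K L D * s * y) ↔
    ((⟨0, 0, 0, A, B⟩ : WeierstrassCurve K).baseChange L).toAffine.Nonsingular x y := by
  have hΔ' : (⟨0, 0, 0, A * D ^ 2, B * D ^ 3⟩ : WeierstrassCurve K).Δ ≠ 0 := by
    rw [tw_Δ]
    exact mul_ne_zero (pow_ne_zero 6 (aux_D_ne_zero hnsq)) hΔ
  have hΔL : ((⟨0, 0, 0, A, B⟩ : WeierstrassCurve K).baseChange L).Δ ≠ 0 := by
    rw [WeierstrassCurve.baseChange, WeierstrassCurve.map_Δ]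
    exact fun h => hΔ ((algebraMap K L).injective (by simpa using h))
  have hΔL' : ((⟨0, 0, 0, A * D ^ 2, B * D ^ 3⟩ : WeierstrassCurve K).baseChange L).Δ ≠ 0 := by
    rw [WeierstrassCurve.baseChange, WeierstrassCurve.map_Δ]
    exact fun h => hΔ' ((algebraMap K L).injective (by simpa using h))
  constructor
  · intro h
    exact (WeierstrassCurve.Affine.equation_iff_nonsingular_of_Δ_ne_zero (W := _) hΔL).mp (tw_equation' hnsq hs h.1)
  · intro h
    exact (WeierstrassCurve.Affine.equation_iff_nonsingular_of_Δ_ne_zero (W := _) hΔL').mp (tw_equation hs h.1)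

lemma tw_slope (hnsq : ¬∃ r : K, r ^ 2 = D) (hs : s ^ 2 = algebraMap K L D)
    (x₁ x₂ y₁ y₂ : L) :
    ((⟨0, 0, 0, A * D ^ 2, B * D ^ 3⟩ : WeierstrassCurve K).baseChange L).toAffine.slope
      (algebraMap K L D * x₁) (algebraMap K L D * x₂)
      (algebraMap K L D * s * y₁) (algebraMap K L D * s * y₂) =
    s * ((⟨0, 0, 0, A, B⟩ : WeierstrassCurve K).baseChange L).toAffine.slope x₁ x₂ y₁ y₂ := by
  have hd : algebraMap K L D ≠ 0 := tw_d_ne_zero hnsq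
  have hsne : s ≠ 0 := aux_s_ne_zero hnsq hs
  have hds : algebraMap K L D * s ≠ 0 := mul_ne_zero hd hsne
  by_cases hx : x₁ = x₂
  · by_cases hy : y₁ = ((⟨0, 0, 0, A, B⟩ : WeierstrassCurve K).baseChange L).toAffine.negY x₂ y₂
    · rw [WeierstrassCurve.Affine.slope_of_Y_eq (congrArg _ hx)
        (by rw [tw_negY, hy]), WeierstrassCurve.Affine.slope_of_Y_eq hx hy, mul_zero]
    · rw [WeierstrassCurve.Affine.slope_of_Y_ne (congrArg _ hx)
        (by rw [tw_negY]; exact fun hc => hy (mul_left_cancel₀ hds hc)),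
        WeierstrassCurve.Affine.slope_of_Y_ne hx hy, tw_negY]
      simp only [WeierstrassCurve.Affine.negY, WeierstrassCurve.baseChange,
        WeierstrassCurve.map, map_zero, map_mul, map_pow, map_add]
      by_cases hy1 : y₁ = 0
      · subst hy1
        simp
      · haveI : CharZero L := charZero_of_injective_algebraMap (algebraMap K L).injective
        have h2y : y₁ - (-y₁ - 0 * x₁ - 0) ≠ 0 := by
          intro hc
          apply hy1
          have h2 : (2 : L) * y₁ = 0 := by linear_combination hc
          rcases mul_eq_zero.mp h2 with h' | h'
          · exact absurd h' two_ne_zero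
          · exact h'
        have h2y' : algebraMap K L D * s * y₁ -
            algebraMap K L D * s * (-y₁ - 0 * x₁ - 0) ≠ 0 := by
          intro hc
          have h2 : (2 : L) * (algebraMap K L D * s * y₁) = 0 := by linear_combination hc
          rcases mul_eq_zero.mp h2 with h' | h'
          · exact absurd h' two_ne_zero
          · exact absurd h' (mul_ne_zero hds hy1)
        rw [← mul_div_assoc, div_eq_div_iff h2y' h2y]
        linear_combination (-(2 * y₁ * (3 * x₁ ^ 2 + algebraMap K L A) * algebraMap K L D)) * hs
  · rw [WeierstrassCurve.Affine.slope_of_X_ne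
      (fun hc => hx (mul_left_cancel₀ hd hc)),
      WeierstrassCurve.Affine.slope_of_X_ne hx]
    have hxx : x₁ - x₂ ≠ 0 := sub_ne_zero.mpr hx
    have hx' : algebraMap K L D * x₁ - algebraMap K L D * x₂ ≠ 0 := by
      intro hc
      have h0 : algebraMap K L D * (x₁ - x₂) = 0 := by linear_combination hc
      rcases mul_eq_zero.mp h0 with h' | h'
      · exact hd h'
      · exact hxx h'
    rw [← mul_div_assoc, div_eq_div_iff hx' hxx]
    ring

lemma tw_addX (hs : s ^ 2 = algebraMap K L D) (x₁ x₂ l : L) :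
    ((⟨0, 0, 0, A * D ^ 2, B * D ^ 3⟩ : WeierstrassCurve K).baseChange L).toAffine.addX
      (algebraMap K L D * x₁) (algebraMap K L D * x₂) (s * l) =
    algebraMap K L D *
      (((⟨0, 0, 0, A, B⟩ : WeierstrassCurve K).baseChange L).toAffine.addX x₁ x₂ l) := by
  simp only [WeierstrassCurve.Affine.addX, WeierstrassCurve.baseChange, WeierstrassCurve.map,
    map_zero]
  linear_combination l ^ 2 * hs

lemma tw_negAddY (hs : s ^ 2 = algebraMap K L D) (x₁ x₂ y₁ l : L) :
    ((⟨0, 0, 0, A * D ^ 2, B * D ^ 3⟩ : WeierstrassCurve K).baseChange L).toAffine.negAddY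
      (algebraMap K L D * x₁) (algebraMap K L D * x₂) (algebraMap K L D * s * y₁) (s * l) =
    algebraMap K L D * s *
      (((⟨0, 0, 0, A, B⟩ : WeierstrassCurve K).baseChange L).toAffine.negAddY x₁ x₂ y₁ l) := by
  simp only [WeierstrassCurve.Affine.negAddY, tw_addX hs, WeierstrassCurve.Affine.addX,
    WeierstrassCurve.baseChange, WeierstrassCurve.map, map_zero]
  linear_combination l ^ 3 * s * hs

lemma tw_addY (hs : s ^ 2 = algebraMap K L D) (x₁ x₂ y₁ l : L) :
    ((⟨0, 0, 0, A * D ^ 2, B * D ^ 3⟩ : WeierstrassCurve K).baseChange L).toAffine.addY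
      (algebraMap K L D * x₁) (algebraMap K L D * x₂) (algebraMap K L D * s * y₁) (s * l) =
    algebraMap K L D * s *
      (((⟨0, 0, 0, A, B⟩ : WeierstrassCurve K).baseChange L).toAffine.addY x₁ x₂ y₁ l) := by
  rw [WeierstrassCurve.Affine.addY, WeierstrassCurve.Affine.addY, tw_addX hs, tw_negAddY hs,
    tw_negY]

variable (A B D) in
/-- The twisting map on points, sending `(x, y)` to `(Dx, Dsy)`. -/
noncomputable def twistFun (hnsq : ¬∃ r : K, r ^ 2 = D) (hs : s ^ 2 = algebraMap K L D)
    (hΔ : (⟨0, 0, 0, A, B⟩ : WeierstrassCurve K).Δ ≠ 0) :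
    (⟨0, 0, 0, A, B⟩ : WeierstrassCurve K)⟮L⟯ →
      (⟨0, 0, 0, A * D ^ 2, B * D ^ 3⟩ : WeierstrassCurve K)⟮L⟯
  | 0 => 0
  | .some _ _ h => .some _ _ ((tw_nonsingular hnsq hs hΔ).mpr h)

lemma twistFun_some (hnsq : ¬∃ r : K, r ^ 2 = D) (hs : s ^ 2 = algebraMap K L D)
    (hΔ : (⟨0, 0, 0, A, B⟩ : WeierstrassCurve K).Δ ≠ 0) {x y : L}
    (h : ((⟨0, 0, 0, A, B⟩ : WeierstrassCurve K).baseChange L).toAffine.Nonsingular x y) :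
    twistFun A B D hnsq hs hΔ (.some _ _ h) = .some _ _ ((tw_nonsingular hnsq hs hΔ).mpr h) := rfl

lemma twistFun_zero (hnsq : ¬∃ r : K, r ^ 2 = D) (hs : s ^ 2 = algebraMap K L D)
    (hΔ : (⟨0, 0, 0, A, B⟩ : WeierstrassCurve K).Δ ≠ 0) :
    twistFun A B D hnsq hs hΔ 0 = 0 := rfl

lemma twistFun_add (hnsq : ¬∃ r : K, r ^ 2 = D) (hs : s ^ 2 = algebraMap K L D)
    (hΔ : (⟨0, 0, 0, A, B⟩ : WeierstrassCurve K).Δ ≠ 0)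
    (P Q : (⟨0, 0, 0, A, B⟩ : WeierstrassCurve K)⟮L⟯) :
    twistFun A B D hnsq hs hΔ (P + Q) =
      twistFun A B D hnsq hs hΔ P + twistFun A B D hnsq hs hΔ Q := by
  have hd : algebraMap K L D ≠ 0 := tw_d_ne_zero hnsq
  have hds : algebraMap K L D * s ≠ 0 := mul_ne_zero hd (aux_s_ne_zero hnsq hs)
  rcases P with _ | @⟨x₁, y₁, h₁⟩ <;> rcases Q with _ | @⟨x₂, y₂, h₂⟩
  · rfl
  · rfl
  · show twistFun A B D hnsq hs hΔ (_ + 0) = _ + 0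
    rw [add_zero, add_zero]
  · by_cases hcase : x₁ = x₂ ∧
      y₁ = ((⟨0, 0, 0, A, B⟩ : WeierstrassCurve K).baseChange L).toAffine.negY x₂ y₂
    · rw [WeierstrassCurve.Affine.Point.add_of_Y_eq hcase.1 hcase.2, twistFun_zero,
        twistFun_some, twistFun_some,
        WeierstrassCurve.Affine.Point.add_of_Y_eq (congrArg _ hcase.1)
          (by rw [tw_negY, hcase.2])]
    · have hxy : x₁ = x₂ →
        y₁ ≠ ((⟨0, 0, 0, A, B⟩ : WeierstrassCurve K).baseChange L).toAffine.negY x₂ y₂ :=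
        fun hx hy => hcase ⟨hx, hy⟩
      rw [WeierstrassCurve.Affine.Point.add_some (fun h => hxy h.1 h.2), twistFun_some, twistFun_some,
        twistFun_some,
        WeierstrassCurve.Affine.Point.add_some (fun ⟨hx, hy⟩ => hcase
        ⟨mul_left_cancel₀ hd hx, by
          rw [tw_negY] at hy
          exact mul_left_cancel₀ hds hy⟩)]
      simp only [WeierstrassCurve.Affine.Point.some.injEq]
      constructor
      · rw [tw_slope hnsq hs, tw_addX hs]
      · rw [tw_slope hnsq hs, tw_addY hs]

variable (A B D) in
/-- The inverse twisting map on points. -/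
noncomputable def twistInv (hnsq : ¬∃ r : K, r ^ 2 = D) (hs : s ^ 2 = algebraMap K L D)
    (hΔ : (⟨0, 0, 0, A, B⟩ : WeierstrassCurve K).Δ ≠ 0) :
    (⟨0, 0, 0, A * D ^ 2, B * D ^ 3⟩ : WeierstrassCurve K)⟮L⟯ →
      (⟨0, 0, 0, A, B⟩ : WeierstrassCurve K)⟮L⟯
  | 0 => 0
  | @WeierstrassCurve.Affine.Point.some _ _ _ X Y h => .some _ _ (by
      refine (tw_nonsingular hnsq hs hΔ (x := (algebraMap K L D)⁻¹ * X)
        (y := (algebraMap K L D * s)⁻¹ * Y)).mp ?_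
      have hd : algebraMap K L D ≠ 0 := tw_d_ne_zero hnsq
      have hds : algebraMap K L D * s ≠ 0 := mul_ne_zero hd (aux_s_ne_zero hnsq hs)
      have e1 : algebraMap K L D * ((algebraMap K L D)⁻¹ * X) = X := by field_simp
      have e2 : algebraMap K L D * s * ((algebraMap K L D * s)⁻¹ * Y) = Y := by
        field_simp
        exact mul_div_cancel_left₀ Y (aux_s_ne_zero hnsq hs)
      rw [e1, e2]
      exact h)

lemma twistInv_twistFun (hnsq : ¬∃ r : K, r ^ 2 = D) (hs : s ^ 2 = algebraMap K L D)
    (hΔ : (⟨0, 0, 0, A, B⟩ : WeierstrassCurve K).Δ ≠ 0)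
    (P : (⟨0, 0, 0, A, B⟩ : WeierstrassCurve K)⟮L⟯) :
    twistInv A B D hnsq hs hΔ (twistFun A B D hnsq hs hΔ P) = P := by
  have hd : algebraMap K L D ≠ 0 := tw_d_ne_zero hnsq
  have hds : algebraMap K L D * s ≠ 0 := mul_ne_zero hd (aux_s_ne_zero hnsq hs)
  rcases P with _ | @⟨x, y, h⟩
  · rfl
  · rw [twistFun_some]
    show WeierstrassCurve.Affine.Point.some _ _ _ = _
    simp only [WeierstrassCurve.Affine.Point.some.injEq]
    constructor
    · field_simp
    · field_simp
      exact mul_div_cancel_left₀ _ (aux_s_ne_zero hnsq hs)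

lemma twistFun_twistInv (hnsq : ¬∃ r : K, r ^ 2 = D) (hs : s ^ 2 = algebraMap K L D)
    (hΔ : (⟨0, 0, 0, A, B⟩ : WeierstrassCurve K).Δ ≠ 0)
    (P : (⟨0, 0, 0, A * D ^ 2, B * D ^ 3⟩ : WeierstrassCurve K)⟮L⟯) :
    twistFun A B D hnsq hs hΔ (twistInv A B D hnsq hs hΔ P) = P := by
  have hd : algebraMap K L D ≠ 0 := tw_d_ne_zero hnsq
  have hds : algebraMap K L D * s ≠ 0 := mul_ne_zero hd (aux_s_ne_zero hnsq hs)
  rcases P with _ | @⟨X, Y, h⟩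
  · rfl
  · show WeierstrassCurve.Affine.Point.some _ _ _ = _
    simp only [WeierstrassCurve.Affine.Point.some.injEq]
    constructor
    · field_simp
    · field_simp
      exact mul_div_cancel_left₀ _ (aux_s_ne_zero hnsq hs)

variable (A B D) in
/-- The twisting isomorphism between `E(L)` and `E^D(L)`. -/
noncomputable def twistEquiv (hnsq : ¬∃ r : K, r ^ 2 = D) (hs : s ^ 2 = algebraMap K L D)
    (hΔ : (⟨0, 0, 0, A, B⟩ : WeierstrassCurve K).Δ ≠ 0) :
    (⟨0, 0, 0, A, B⟩ : WeierstrassCurve K)⟮L⟯ ≃+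
      (⟨0, 0, 0, A * D ^ 2, B * D ^ 3⟩ : WeierstrassCurve K)⟮L⟯ where
  toFun := twistFun A B D hnsq hs hΔ
  invFun := twistInv A B D hnsq hs hΔ
  left_inv := twistInv_twistFun hnsq hs hΔ
  right_inv := twistFun_twistInv hnsq hs hΔ
  map_add' := twistFun_add hnsq hs hΔ

end Twist

section PointConj

variable {K L : Type*} [Field K] [CharZero K] [Field L] [Algebra K L]
variable {A B D : K} {s : L}
variable (hnsq : ¬∃ r : K, r ^ 2 = D) (hs : s ^ 2 = algebraMap K L D)
  (hL : IntermediateField.adjoin K {s} = ⊤)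

/-- A point of `W(L)` fixed by conjugation descends to `W(K)`. -/
lemma fixed_descend (W : WeierstrassCurve K) {P : W⟮L⟯}
    (hfix : WeierstrassCurve.Affine.Point.map (W' := W) (conj hnsq hs hL) P = P) :
    ∃ Q : W⟮K⟯, WeierstrassCurve.Affine.Point.baseChange (W' := W) K L Q = P := by
  rcases P with _ | @⟨x, y, h⟩
  · exact ⟨0, rfl⟩
  · rw [WeierstrassCurve.Affine.Point.map_some] at hfix
    simp only [WeierstrassCurve.Affine.Point.some.injEq] at hfix
    obtain ⟨a, ha⟩ := conj_fixed hnsq hs hL hfix.1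
    obtain ⟨b, hb⟩ := conj_fixed hnsq hs hL hfix.2
    subst ha hb
    have h' : (W.baseChange K).toAffine.Nonsingular a b := by
      have := (WeierstrassCurve.Affine.baseChange_nonsingular (f := Algebra.ofId K L) W
        (Algebra.ofId K L).injective a b).mp ?_
      · exact this
      · simpa [Algebra.ofId_apply] using h
    exact ⟨.some _ _ h', by rw [WeierstrassCurve.Affine.Point.baseChange,
      WeierstrassCurve.Affine.Point.map_some]; rfl⟩

lemma conj_comp_conj :
    (conj hnsq hs hL).comp (conj hnsq hs hL) = AlgHom.id K L :=
  AlgHom.ext (conj_conj hnsq hs hL)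

lemma point_conj_conj (W : WeierstrassCurve K) (P : W⟮L⟯) :
    WeierstrassCurve.Affine.Point.map (W' := W) (conj hnsq hs hL)
      (WeierstrassCurve.Affine.Point.map (W' := W) (conj hnsq hs hL) P) = P := by
  rw [WeierstrassCurve.Affine.Point.map_map, conj_comp_conj]
  cases P <;> rfl

lemma point_conj_baseChange (W : WeierstrassCurve K) (Q : W⟮K⟯) :
    WeierstrassCurve.Affine.Point.map (W' := W) (conj hnsq hs hL)
      (WeierstrassCurve.Affine.Point.baseChange (W' := W) K L Q) =
    WeierstrassCurve.Affine.Point.baseChange (W' := W) K L Q :=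
  WeierstrassCurve.Affine.Point.map_baseChange (W' := W) (conj hnsq hs hL) Q

/-- Conjugation anticommutes with the twisting map. -/
lemma conj_twistFun (hΔ : (⟨0, 0, 0, A, B⟩ : WeierstrassCurve K).Δ ≠ 0)
    (P : (⟨0, 0, 0, A, B⟩ : WeierstrassCurve K)⟮L⟯) :
    WeierstrassCurve.Affine.Point.map (W' := (⟨0, 0, 0, A * D ^ 2, B * D ^ 3⟩ : WeierstrassCurve K))
      (conj hnsq hs hL) (twistFun A B D hnsq hs hΔ P) =
    twistFun A B D hnsq hs hΔ
      (- WeierstrassCurve.Affine.Point.map (W' := (⟨0, 0, 0, A, B⟩ : WeierstrassCurve K))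
        (conj hnsq hs hL) P) := by
  rcases P with _ | @⟨x, y, h⟩
  · rfl
  · rw [twistFun_some, WeierstrassCurve.Affine.Point.map_some,
      WeierstrassCurve.Affine.Point.map_some, WeierstrassCurve.Affine.Point.neg_some,
      twistFun_some]
    simp only [WeierstrassCurve.Affine.Point.some.injEq]
    have hcd : conj hnsq hs hL (algebraMap K L D) = algebraMap K L D :=
      (conj hnsq hs hL).commutes D
    constructor
    · rw [map_mul, hcd]
    · rw [map_mul, map_mul, hcd, conj_s]
      simp only [WeierstrassCurve.Affine.negY, WeierstrassCurve.baseChange,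
        WeierstrassCurve.map, map_zero]
      ring

end PointConj

section TorsionAbstract

/-- If `f, g` are homomorphisms whose composites are multiplication by `2`, the `n`-torsion
subgroups are isomorphic for every odd `n`. -/
lemma torsion_equiv_of_two_isog {G H : Type*} [AddCommGroup G] [AddCommGroup H]
    (f : G →+ H) (g : H →+ G) (hgf : ∀ x, g (f x) = 2 • x) (hfg : ∀ y, f (g y) = 2 • y)
    {n : ℕ} (hn : Odd n) : Nonempty (↥(nTorsion G n) ≃+ ↥(nTorsion H n)) := by
  obtain ⟨t, ht⟩ := hn
  have keyG : ∀ x : G, n • x = 0 → (t + 1) • (2 • x) = x := by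
    intro x hx
    calc (t + 1) • (2 • x) = (2 * (t + 1)) • x := by rw [mul_comm, mul_smul]
    _ = n • x + x := by rw [show 2 * (t + 1) = n + 1 by omega, add_smul, one_smul]
    _ = x := by rw [hx, zero_add]
  have keyH : ∀ y : H, n • y = 0 → (t + 1) • (2 • y) = y := by
    intro y hy
    calc (t + 1) • (2 • y) = (2 * (t + 1)) • y := by rw [mul_comm, mul_smul]
    _ = n • y + y := by rw [show 2 * (t + 1) = n + 1 by omega, add_smul, one_smul]
    _ = y := by rw [hy, zero_add]
  refine ⟨{
    toFun := fun x => ⟨f x, show n • (f (x : G)) = 0 by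
      rw [← map_nsmul, show n • (x : G) = 0 from x.2, map_zero]⟩
    invFun := fun y => ⟨(t + 1) • g y, show n • ((t + 1) • g (y : H)) = 0 by
      rw [smul_comm, ← map_nsmul, show n • (y : H) = 0 from y.2, map_zero, smul_zero]⟩
    left_inv := fun x => by
      ext
      show (t + 1) • g (f (x : G)) = (x : G)
      rw [hgf, keyG _ x.2]
    right_inv := fun y => by
      ext
      show f ((t + 1) • g (y : H)) = (y : H)
      rw [map_nsmul, hfg, keyH _ y.2]
    map_add' := fun x y => by
      ext
      show f ((x : G) + (y : G)) = f (x : G) + f (y : G)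
      rw [map_add] }⟩

/-- `n`-torsion of a product splits. -/
def torsionProdEquiv (G H : Type*) [AddCommGroup G] [AddCommGroup H] (n : ℕ) :
    ↥(nTorsion (G × H) n) ≃+ ↥(nTorsion G n) × ↥(nTorsion H n) where
  toFun x := (⟨x.1.1, show n • (x : G × H).1 = 0 by
      have h := show n • (x : G × H) = 0 from x.2
      rw [Prod.ext_iff] at h
      exact h.1⟩,
    ⟨x.1.2, show n • (x : G × H).2 = 0 by
      have h := show n • (x : G × H) = 0 from x.2
      rw [Prod.ext_iff] at h
      exact h.2⟩)
  invFun p := ⟨(p.1.1, p.2.1), show n • ((p.1.1 : G), (p.2.1 : H)) = 0 by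
      have h1 := show n • (p.1 : G) = 0 from p.1.2
      have h2 := show n • (p.2 : H) = 0 from p.2.2
      rw [Prod.ext_iff]
      exact ⟨h1, h2⟩⟩
  left_inv x := rfl
  right_inv p := rfl
  map_add' x y := rfl

end TorsionAbstract


open scoped Classical in
/-- (González-Jiménez) Let `E : y² = x³ + Ax + B` be an elliptic curve over a field `K` of
characteristic zero, `D ∈ K` a non-square, `L = K(√D)`, and `E^D` the quadratic twist of `E`
by `D`. Then there are homomorphisms `Ψ : E(L) → E(K) × E^D(K)` and
`Ψ̄ : E(K) × E^D(K) → E(L)` with `Ψ̄ ∘ Ψ = [2]` and `Ψ ∘ Ψ̄ = [2] × [2]`; moreover, for every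
odd `n`, `E(L)[n] ≅ E(K)[n] × E^D(K)[n]`. -/
theorem twist_torsion_decomposition
    (K L : Type*) [Field K] [CharZero K] [Field L] [Algebra K L]
    (A B D : K) (hnsq : ¬∃ r : K, r ^ 2 = D)
    (s : L) (hs : s ^ 2 = algebraMap K L D)
    (hL : IntermediateField.adjoin K {s} = ⊤)
    (W W' : WeierstrassCurve K)
    (hW : W = ⟨0, 0, 0, A, B⟩) (hW' : W' = ⟨0, 0, 0, A * D ^ 2, B * D ^ 3⟩)
    (hΔ : W.Δ ≠ 0) :
    ∃ (Ψ : (Affine.Point (Affine.baseChange W L)) →+ (Affine.Point (Affine.baseChange W K)) × (Affine.Point (Affine.baseChange W' K))) (Ψ' : (Affine.Point (Affine.baseChange W K)) × (Affine.Point (Affine.baseChange W' K)) →+ (Affine.Point (Affine.baseChange W L))),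
      (∀ P : (Affine.Point (Affine.baseChange W L)), Ψ' (Ψ P) = 2 • P) ∧
      (∀ Q : (Affine.Point (Affine.baseChange W K)) × (Affine.Point (Affine.baseChange W' K)), Ψ (Ψ' Q) = (2 • Q.1, 2 • Q.2)) ∧
      ∀ n : ℕ, Odd n →
        Nonempty (↥(nTorsion (Affine.Point (Affine.baseChange W L)) n) ≃+ ↥(nTorsion (Affine.Point (Affine.baseChange W K)) n) × ↥(nTorsion (Affine.Point (Affine.baseChange W' K)) n)) := by
  subst hW hW'
  classical
  set σ := conj hnsq hs hL with hσ
  -- conjugation on points of each curve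
  set τ : (⟨0, 0, 0, A, B⟩ : WeierstrassCurve K)⟮L⟯ →+
      (⟨0, 0, 0, A, B⟩ : WeierstrassCurve K)⟮L⟯ :=
    WeierstrassCurve.Affine.Point.map (W' := (⟨0, 0, 0, A, B⟩ : WeierstrassCurve K)) σ with hτ
  set τ' : (⟨0, 0, 0, A * D ^ 2, B * D ^ 3⟩ : WeierstrassCurve K)⟮L⟯ →+
      (⟨0, 0, 0, A * D ^ 2, B * D ^ 3⟩ : WeierstrassCurve K)⟮L⟯ :=
    WeierstrassCurve.Affine.Point.map
      (W' := (⟨0, 0, 0, A * D ^ 2, B * D ^ 3⟩ : WeierstrassCurve K)) σ with hτ'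
  set ι : (⟨0, 0, 0, A, B⟩ : WeierstrassCurve K)⟮K⟯ →+
      (⟨0, 0, 0, A, B⟩ : WeierstrassCurve K)⟮L⟯ :=
    WeierstrassCurve.Affine.Point.baseChange (W' := (⟨0, 0, 0, A, B⟩ : WeierstrassCurve K)) K L with hι
  set ι' : (⟨0, 0, 0, A * D ^ 2, B * D ^ 3⟩ : WeierstrassCurve K)⟮K⟯ →+
      (⟨0, 0, 0, A * D ^ 2, B * D ^ 3⟩ : WeierstrassCurve K)⟮L⟯ :=
    WeierstrassCurve.Affine.Point.baseChange
      (W' := (⟨0, 0, 0, A * D ^ 2, B * D ^ 3⟩ : WeierstrassCurve K)) K L with hι'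
  set φ := twistEquiv A B D hnsq hs hΔ with hφ
  have hττ : ∀ P, τ (τ P) = P := point_conj_conj hnsq hs hL _
  have hτ'τ' : ∀ P, τ' (τ' P) = P := point_conj_conj hnsq hs hL _
  have hτι : ∀ Q, τ (ι Q) = ι Q := point_conj_baseChange hnsq hs hL _
  have hτ'ι' : ∀ Q, τ' (ι' Q) = ι' Q := point_conj_baseChange hnsq hs hL _
  have hcomm : ∀ P, τ' (φ P) = φ (-(τ P)) := conj_twistFun hnsq hs hL hΔ
  have hcomm' : ∀ R, τ (φ.symm R) = -(φ.symm (τ' R)) := by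
    intro R
    have h1 := hcomm (φ.symm R)
    rw [AddEquiv.apply_symm_apply] at h1
    have h2 := congrArg φ.symm h1
    rw [AddEquiv.symm_apply_apply] at h2
    rw [h2, neg_neg]
  have hιinj : Function.Injective ι :=
    WeierstrassCurve.Affine.Point.map_injective _
  have hι'inj : Function.Injective ι' :=
    WeierstrassCurve.Affine.Point.map_injective _
  -- descent of the trace parts
  have hdesc1 : ∀ P, ∃ Q, ι Q = P + τ P := by
    intro P
    apply fixed_descend hnsq hs hL
    rw [show WeierstrassCurve.Affine.Point.map σ (P + τ P) = τ (P + τ P) from rfl,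
      map_add, hττ, add_comm]
  have hdesc2 : ∀ P, ∃ Q, ι' Q = φ (P - τ P) := by
    intro P
    apply fixed_descend hnsq hs hL
    rw [show WeierstrassCurve.Affine.Point.map σ (φ (P - τ P)) = τ' (φ (P - τ P)) from rfl,
      hcomm, map_sub, hττ, neg_sub]
  choose Ψ₁ hΨ₁ using hdesc1
  choose Ψ₂ hΨ₂ using hdesc2
  have hΨ₁add : ∀ P Q, Ψ₁ (P + Q) = Ψ₁ P + Ψ₁ Q := by
    intro P Q
    apply hιinj
    rw [map_add, hΨ₁, hΨ₁, hΨ₁, map_add]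
    abel
  have hΨ₂add : ∀ P Q, Ψ₂ (P + Q) = Ψ₂ P + Ψ₂ Q := by
    intro P Q
    apply hι'inj
    rw [map_add, hΨ₂, hΨ₂, hΨ₂, ← map_add]
    congr 1
    rw [map_add]
    abel
  set Ψ : (⟨0, 0, 0, A, B⟩ : WeierstrassCurve K)⟮L⟯ →+
      (⟨0, 0, 0, A, B⟩ : WeierstrassCurve K)⟮K⟯ ×
        (⟨0, 0, 0, A * D ^ 2, B * D ^ 3⟩ : WeierstrassCurve K)⟮K⟯ :=
    AddMonoidHom.mk' (fun P => (Ψ₁ P, Ψ₂ P)) (fun P Q => by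
      rw [Prod.mk_add_mk, Prod.mk.injEq]
      exact ⟨hΨ₁add P Q, hΨ₂add P Q⟩) with hΨ
  set Ψ' : (⟨0, 0, 0, A, B⟩ : WeierstrassCurve K)⟮K⟯ ×
        (⟨0, 0, 0, A * D ^ 2, B * D ^ 3⟩ : WeierstrassCurve K)⟮K⟯ →+
      (⟨0, 0, 0, A, B⟩ : WeierstrassCurve K)⟮L⟯ :=
    (ι.comp (AddMonoidHom.fst _ _)) +
      ((φ.symm.toAddMonoidHom.comp ι').comp (AddMonoidHom.snd _ _)) with hΨ'
  have key1 : ∀ P, Ψ' (Ψ P) = 2 • P := by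
    intro P
    show ι (Ψ₁ P) + φ.symm (ι' (Ψ₂ P)) = 2 • P
    rw [hΨ₁, hΨ₂, AddEquiv.symm_apply_apply, two_nsmul]
    abel
  have key2 : ∀ Q, Ψ (Ψ' Q) = (2 • Q.1, 2 • Q.2) := by
    intro Q
    set R := ι Q.1 + φ.symm (ι' Q.2) with hR
    have hτR : τ R = ι Q.1 - φ.symm (ι' Q.2) := by
      rw [hR, map_add, hτι, hcomm', hτ'ι', sub_eq_add_neg]
    have e1 : Ψ₁ R = 2 • Q.1 := by
      apply hιinj
      rw [hΨ₁, hτR, map_nsmul, hR, two_nsmul]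
      abel
    have e2 : Ψ₂ R = 2 • Q.2 := by
      apply hι'inj
      rw [hΨ₂, hτR, map_nsmul, hR]
      have : ι Q.1 + φ.symm (ι' Q.2) - (ι Q.1 - φ.symm (ι' Q.2)) = 2 • φ.symm (ι' Q.2) := by
        rw [two_nsmul]; abel
      rw [this, map_nsmul, AddEquiv.apply_symm_apply]
    show ((Ψ₁ R, Ψ₂ R) : _ × _) = _
    rw [e1, e2]
  refine ⟨Ψ, Ψ', key1, key2, ?_⟩
  intro n hn
  have key2' : ∀ Q, Ψ (Ψ' Q) = 2 • Q := by
    intro Q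
    rw [key2]
    rfl
  obtain ⟨e⟩ := torsion_equiv_of_two_isog Ψ Ψ' key1 key2' hn
  exact ⟨e.trans (torsionProdEquiv _ _ n)⟩
end

section
/- Let E be an elliptic curve defined over ℚ and let K be a finite Galois extension of ℚ whose degree [K:ℚ] is coprime to a prime p. Suppose that for some positive integer n one has E(K)[pⁿ] = ⟨P_{pⁿ}, Q_p⟩ ≅ (ℤ/pⁿℤ) ⊕ (ℤ/pℤ), where P_{pⁿ} ∈ E(K) is a point of order pⁿ that is not defined over ℚ and Q_p ∈ E(ℚ) is a point of order p. Then [ℚ(P_{pⁿ}) : ℚ] divides p − 1. -/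
open WeierstrassCurve WeierstrassCurve.Affine

/-- The intermediate field of elements fixed by an automorphism. -/
def myFixedBy {K : Type*} [Field K] [Algebra ℚ K] (σ : K ≃ₐ[ℚ] K) :
    IntermediateField ℚ K where
  carrier := {z | σ z = z}
  mul_mem' := fun {a b} ha hb => by
    simp only [Set.mem_setOf_eq, map_mul] at *; rw [ha, hb]
  add_mem' := fun {a b} ha hb => by
    simp only [Set.mem_setOf_eq, map_add] at *; rw [ha, hb]
  one_mem' := map_one σ
  zero_mem' := map_zero σ
  algebraMap_mem' := fun r => σ.commutes r
  inv_mem' := fun a ha => by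
    simp only [Set.mem_setOf_eq, map_inv₀] at *; rw [ha]

open scoped Classical in
/-- Let `E` be an elliptic curve over `ℚ` and `K` a finite Galois extension of `ℚ` of degree
coprime to a prime `p`. If `E(K)[pⁿ] = ⟨P, Q⟩ ≅ ℤ/pⁿ ⊕ ℤ/p`, where `P ∈ E(K)` has order `pⁿ`
and is not defined over `ℚ` and `Q ∈ E(ℚ)` has order `p`, then `[ℚ(P) : ℚ]` divides `p − 1`. -/
theorem degree_of_field_of_definition_dvd_p_sub_one
    (K : Type*) [Field K] [NumberField K] [IsGalois ℚ K]
    (W : WeierstrassCurve ℚ) [W.IsElliptic]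
    (p : ℕ) (hp : p.Prime) (hcop : Nat.Coprime (Module.finrank ℚ K) p)
    (n : ℕ) (hn : 0 < n)
    (x y : K) (h : (W.baseChange K).toAffine.Nonsingular x y)
    (hordP : addOrderOf (Point.some x y h : (W.baseChange K).toAffine.Point) = p ^ n)
    (hPnotrat : IntermediateField.adjoin ℚ {x, y} ≠ ⊥)
    (xq yq : K) (hq : (W.baseChange K).toAffine.Nonsingular xq yq)
    (hxq : xq ∈ (⊥ : IntermediateField ℚ K)) (hyq : yq ∈ (⊥ : IntermediateField ℚ K))
    (hordQ : addOrderOf (Point.some xq yq hq : (W.baseChange K).toAffine.Point) = p)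
    (hgen : AddSubgroup.closure {(Point.some x y h : (W.baseChange K).toAffine.Point), (Point.some xq yq hq : (W.baseChange K).toAffine.Point)} =
      nTorsion (W.baseChange K).toAffine.Point (p ^ n))
    (hiso : Nonempty (↥(nTorsion (W.baseChange K).toAffine.Point (p ^ n)) ≃+ ZMod (p ^ n) × ZMod p)) :
    Module.finrank ℚ ↥(IntermediateField.adjoin ℚ {x, y}) ∣ (p - 1) := by
  classical
  haveI : NeZero p := ⟨hp.pos.ne'⟩
  haveI : NeZero (p ^ n) := ⟨pow_ne_zero n hp.pos.ne'⟩
  haveI : Fact (1 < p ^ n) := ⟨Nat.one_lt_pow hn.ne' hp.one_lt⟩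
  set PP : (W.baseChange K).toAffine.Point := Point.some _ _ h with hPPdef
  set QQ : (W.baseChange K).toAffine.Point := Point.some _ _ hq with hQQdef
  set T : AddSubgroup (W.baseChange K).toAffine.Point := nTorsion (W.baseChange K).toAffine.Point (p ^ n) with hTdef
  have hmemT : ∀ t : (W.baseChange K).toAffine.Point, t ∈ T ↔ (p ^ n) • t = 0 := fun t => Iff.rfl
  -- basic torsion facts
  have hPsmul : ((p ^ n : ℕ) : ℤ) • PP = 0 := by
    rw [natCast_zsmul, ← hordP]; exact addOrderOf_nsmul_eq_zero PP
  have hQsmul : ((p : ℕ) : ℤ) • QQ = 0 := by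
    rw [natCast_zsmul, ← hordQ]; exact addOrderOf_nsmul_eq_zero QQ
  have hPT : PP ∈ T := by
    rw [hmemT, ← natCast_zsmul]; exact hPsmul
  have hQT : QQ ∈ T := by
    rw [hmemT]
    have hpn : p ^ n = p ^ (n - 1) * p := by
      rw [← pow_succ, Nat.sub_add_cancel hn]
    rw [hpn, mul_smul, ← hordQ, addOrderOf_nsmul_eq_zero, smul_zero]
  have hMsmul : ∀ m : ZMod (p ^ n) × ZMod p, (p ^ n) • m = 0 := by
    intro m
    have h1 : (p ^ n) • m.1 = 0 := by
      rw [nsmul_eq_mul, ZMod.natCast_self, zero_mul]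
    have h2 : (p ^ n) • m.2 = 0 := by
      rw [nsmul_eq_mul, Nat.cast_pow, ZMod.natCast_self, zero_pow hn.ne', zero_mul]
    exact Prod.ext h1 h2
  -- the homomorphism ZMod (p^n) × ZMod p →+ (W.baseChange K).toAffine.Point
  set fP : ZMod (p ^ n) →+ (W.baseChange K).toAffine.Point := ZMod.lift (p ^ n) ⟨zmultiplesHom _ PP, hPsmul⟩ with hfPdef
  set fQ : ZMod p →+ (W.baseChange K).toAffine.Point := ZMod.lift p ⟨zmultiplesHom _ QQ, hQsmul⟩ with hfQdef
  set f : ZMod (p ^ n) × ZMod p →+ (W.baseChange K).toAffine.Point := fP.coprod fQ with hfdef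
  have hfint : ∀ a b : ℤ, f ((a : ZMod (p ^ n)), (b : ZMod p)) = a • PP + b • QQ := by
    intro a b
    rw [hfdef, AddMonoidHom.coprod_apply, hfPdef, hfQdef]
    rw [ZMod.lift_coe, ZMod.lift_coe]
    rfl
  have hfval : ∀ m : ZMod (p ^ n) × ZMod p,
      f m = (m.1.val : ℤ) • PP + (m.2.val : ℤ) • QQ := by
    intro m
    have e1 : ((m.1.val : ℤ) : ZMod (p ^ n)) = m.1 := by
      rw [Int.cast_natCast, ZMod.natCast_val, ZMod.cast_id]
    have e2 : ((m.2.val : ℤ) : ZMod p) = m.2 := by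
      rw [Int.cast_natCast, ZMod.natCast_val, ZMod.cast_id]
    have := hfint (m.1.val : ℤ) (m.2.val : ℤ)
    rw [e1, e2] at this
    simpa using this
  have hfT : ∀ m, f m ∈ T := by
    intro m
    rw [hmemT, ← map_nsmul, hMsmul m, map_zero]
  set f' : ZMod (p ^ n) × ZMod p →+ T := f.codRestrict T hfT with hf'def
  have hf'val : ∀ m, ((f' m : T) : (W.baseChange K).toAffine.Point) = f m := fun m => rfl
  have hsurj : Function.Surjective f' := by
    rintro ⟨t, ht⟩
    rw [← hgen] at ht
    obtain ⟨a, b, hab⟩ := AddSubgroup.mem_closure_pair.mp ht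
    exact ⟨((a : ZMod (p ^ n)), (b : ZMod p)), Subtype.ext ((hfint a b).trans hab)⟩
  haveI : Finite ↥T := Finite.of_equiv _ hiso.some.symm.toEquiv
  have hinj : Function.Injective f' :=
    (Finite.injective_iff_surjective_of_equiv hiso.some.symm.toEquiv).mpr hsurj
  set e : (ZMod (p ^ n) × ZMod p) ≃+ T := AddEquiv.ofBijective f' ⟨hinj, hsurj⟩ with hedef
  have he_apply : ∀ m, ((e m : T) : (W.baseChange K).toAffine.Point) = f m := fun m => rfl
  have heP : e (1, 0) = ⟨PP, hPT⟩ := by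
    apply Subtype.ext
    rw [he_apply]
    have := hfint 1 0
    simpa using this
  have heQ : e (0, 1) = ⟨QQ, hQT⟩ := by
    apply Subtype.ext
    rw [he_apply]
    have := hfint 0 1
    simpa using this
  -- Galois action
  set act : (K ≃ₐ[ℚ] K) → ((W.baseChange K).toAffine.Point →+ (W.baseChange K).toAffine.Point) := fun σ => Point.map (W' := W) σ.toAlgHom with hactdef
  have hact_one : ∀ t : (W.baseChange K).toAffine.Point, act 1 t = t := by
    intro t; cases t <;> rfl
  have hact_mul : ∀ (σ τ : K ≃ₐ[ℚ] K) (t : (W.baseChange K).toAffine.Point), act (σ * τ) t = act σ (act τ t) := by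
    intro σ τ t; cases t <;> rfl
  have hactT : ∀ (σ : K ≃ₐ[ℚ] K) (t : (W.baseChange K).toAffine.Point), t ∈ T → act σ t ∈ T := by
    intro σ t ht
    rw [hmemT] at ht ⊢
    rw [← map_nsmul, ht, map_zero]
  have hsome_eq : ∀ {x₁ y₁ x₂ y₂ : K} (h₁ : (W.baseChange K).toAffine.Nonsingular x₁ y₁)
      (h₂ : (W.baseChange K).toAffine.Nonsingular x₂ y₂), x₁ = x₂ → y₁ = y₂ →
      (Point.some _ _ h₁ : (W.baseChange K).toAffine.Point) = Point.some _ _ h₂ := by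
    rintro x₁ y₁ x₂ y₂ h₁ h₂ rfl rfl; rfl
  have hact_some : ∀ (σ : K ≃ₐ[ℚ] K) {x₁ y₁ : K}
      (h₁ : (W.baseChange K).toAffine.Nonsingular x₁ y₁),
      ∃ h₂ : (W.baseChange K).toAffine.Nonsingular (σ x₁) (σ y₁),
        act σ (Point.some _ _ h₁) = Point.some _ _ h₂ := by
    intro σ x₁ y₁ h₁; exact ⟨_, rfl⟩
  have hactQ : ∀ σ : K ≃ₐ[ℚ] K, act σ QQ = QQ := by
    intro σ
    obtain ⟨rx, hrx⟩ := IntermediateField.mem_bot.mp hxq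
    obtain ⟨ry, hry⟩ := IntermediateField.mem_bot.mp hyq
    obtain ⟨h₂, hh⟩ := hact_some σ hq
    rw [hQQdef, hh]
    exact hsome_eq _ _ (by rw [← hrx]; exact σ.commutes rx) (by rw [← hry]; exact σ.commutes ry)
  -- the coordinate vector of σ(P)
  set ctov : (K ≃ₐ[ℚ] K) → ZMod (p ^ n) × ZMod p :=
    fun σ => e.symm ⟨act σ PP, hactT σ PP hPT⟩ with hctovdef
  have hctov_spec : ∀ σ : K ≃ₐ[ℚ] K, f (ctov σ) = act σ PP := by
    intro σ
    have : e (ctov σ) = ⟨act σ PP, hactT σ PP hPT⟩ := e.apply_symm_apply _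
    calc f (ctov σ) = ((e (ctov σ) : T) : (W.baseChange K).toAffine.Point) := (he_apply _).symm
    _ = act σ PP := by rw [this]
  have hKey : ∀ (σ : K ≃ₐ[ℚ] K) (m : ZMod (p ^ n) × ZMod p),
      act σ (f m) = f (m.1.val • ctov σ + (0, m.2)) := by
    intro σ m
    rw [hfval m, map_add, map_zsmul, map_zsmul, hactQ]
    rw [map_add f, map_nsmul f, hctov_spec]
    have h0 : f ((0 : ZMod (p ^ n)), m.2) = (((0, m.2) : ZMod (p ^ n) × ZMod p).2.val : ℤ) • QQ := by
      rw [hfval]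
      simp [ZMod.val_zero]
    rw [h0, natCast_zsmul]
  have hctov_mul : ∀ σ τ : K ≃ₐ[ℚ] K,
      ctov (σ * τ) = (ctov τ).1.val • ctov σ + (0, (ctov τ).2) := by
    intro σ τ
    rw [hctovdef]
    apply (AddEquiv.symm_apply_eq e).mpr
    apply Subtype.ext
    rw [he_apply]
    show act (σ * τ) PP = _
    rw [hact_mul, ← hctov_spec τ, hKey]
  have hctov_one : ctov 1 = (1, 0) := by
    rw [hctovdef]
    apply (AddEquiv.symm_apply_eq e).mpr
    apply Subtype.ext
    rw [heP]
    exact hact_one PP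
  -- the character χ : Gal(K/ℚ) → (ZMod (p^n))ˣ
  obtain ⟨χu, hχu⟩ : ∃ χu : (K ≃ₐ[ℚ] K) →* (ZMod (p ^ n))ˣ,
      ∀ σ, (χu σ : ZMod (p ^ n)) = (ctov σ).1 := by
    have hχmul : ∀ σ τ : K ≃ₐ[ℚ] K, (ctov (σ * τ)).1 = (ctov σ).1 * (ctov τ).1 := by
      intro σ τ
      rw [hctov_mul σ τ, Prod.fst_add, Prod.smul_fst]
      show (ctov τ).1.val • (ctov σ).1 + (0 : ZMod (p ^ n)) = _
      rw [add_zero, nsmul_eq_mul, ZMod.natCast_val, ZMod.cast_id, mul_comm]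
    exact ⟨MonoidHom.toHomUnits ⟨⟨fun σ => (ctov σ).1, by show (ctov (1 : K ≃ₐ[ℚ] K)).1 = 1; rw [hctov_one]⟩, hχmul⟩,
      fun σ => rfl⟩
  have hK1mem : ∀ σ, σ ∈ χu.ker ↔ (ctov σ).1 = 1 := by
    intro σ
    rw [MonoidHom.mem_ker]
    constructor
    · intro h1
      rw [← hχu σ, h1, Units.val_one]
    · intro h1
      exact Units.ext (by rw [hχu σ, h1, Units.val_one])
  -- the second character β : ker χ → ZMod p
  obtain ⟨β, hβ⟩ : ∃ β : ↥χu.ker →* Multiplicative (ZMod p),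
      ∀ σ : ↥χu.ker, β σ = Multiplicative.ofAdd (ctov σ.1).2 := by
    have hmul : ∀ σ τ : ↥χu.ker, (ctov (σ.1 * τ.1)).2 = (ctov σ.1).2 + (ctov τ.1).2 := by
      intro σ τ
      have h1 : (ctov τ.1).1 = 1 := (hK1mem τ.1).mp τ.2
      rw [hctov_mul, h1, ZMod.val_one, one_smul, Prod.snd_add]
    refine ⟨⟨⟨fun σ => Multiplicative.ofAdd (ctov σ.1).2, ?_⟩, ?_⟩, fun σ => rfl⟩
    · show Multiplicative.ofAdd (ctov (1 : K ≃ₐ[ℚ] K)).2 = 1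
      rw [hctov_one]
      rfl
    · intro σ τ
      show Multiplicative.ofAdd (ctov (σ.1 * τ.1)).2 = _
      rw [hmul]
      rfl
  -- the fixing subgroup of ℚ(x, y)
  set F := IntermediateField.adjoin ℚ {x, y} with hFdef
  set S := F.fixingSubgroup with hSdef
  have hxF : x ∈ F := IntermediateField.subset_adjoin ℚ _ (by left; rfl)
  have hyF : y ∈ F := IntermediateField.subset_adjoin ℚ _ (by right; rfl)
  have hfixP : ∀ σ : K ≃ₐ[ℚ] K, σ ∈ S ↔ act σ PP = PP := by
    intro σ
    rw [hSdef, IntermediateField.mem_fixingSubgroup_iff]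
    constructor
    · intro hfix
      obtain ⟨h₂, hh⟩ := hact_some σ h
      rw [hPPdef, hh]
      exact hsome_eq _ _ (hfix x hxF) (hfix y hyF)
    · intro hPPeq z hz
      obtain ⟨h₂, hh⟩ := hact_some σ h
      rw [hPPdef, hh] at hPPeq
      have hco := Point.some.inj hPPeq
      have hle : F ≤ myFixedBy σ := by
        rw [hFdef, IntermediateField.adjoin_le_iff]
        rintro z' (rfl | hz')
        · exact hco.1
        · rw [Set.mem_singleton_iff] at hz'
          subst hz'
          exact hco.2
      exact hle hz
  have h10 : e.symm ⟨PP, hPT⟩ = (1, 0) := by rw [← heP, AddEquiv.symm_apply_apply]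
  have hSiff : ∀ σ, σ ∈ S ↔ ctov σ = (1, 0) := by
    intro σ
    rw [hfixP σ]
    constructor
    · intro hPPeq
      show e.symm ⟨act σ PP, hactT σ PP hPT⟩ = (1, 0)
      rw [← h10]
      exact congrArg (⇑e.symm) (Subtype.ext hPPeq)
    · intro hc
      have h2 : (⟨act σ PP, hactT σ PP hPT⟩ : ↥T) = e (1, 0) := by
        rw [← hc]
        exact (e.apply_symm_apply _).symm
      rw [heP] at h2
      exact congrArg Subtype.val h2
  have hSK1 : S ≤ χu.ker := fun σ hσ => (hK1mem σ).mpr (by rw [(hSiff σ).mp hσ])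
  have hsubker : S.subgroupOf χu.ker = β.ker := by
    ext σ
    rw [Subgroup.mem_subgroupOf, MonoidHom.mem_ker, hβ σ]
    constructor
    · intro hσ
      rw [(hSiff σ.1).mp hσ]
      rfl
    · intro hσ
      apply (hSiff σ.1).mpr
      have h2 : (ctov σ.1).2 = 0 := by simpa using hσ
      exact Prod.ext ((hK1mem σ.1).mp σ.2) h2
  -- index arithmetic
  have hcardG : Nat.card (K ≃ₐ[ℚ] K) = Module.finrank ℚ K := by
    exact IsGalois.card_aut_eq_finrank ℚ K
  have hK1idx : χu.ker.index ∣ p - 1 := by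
    have h1 : χu.ker.index = Nat.card χu.range := Subgroup.index_ker χu
    have h2 : Nat.card χu.range ∣ Nat.card (ZMod (p ^ n))ˣ :=
      Subgroup.card_subgroup_dvd_card _
    have h3 : Nat.card (ZMod (p ^ n))ˣ = p ^ (n - 1) * (p - 1) := by
      rw [Nat.card_eq_fintype_card, ZMod.card_units_eq_totient, Nat.totient_prime_pow hp hn]
    have h4 : χu.ker.index ∣ Nat.card (K ≃ₐ[ℚ] K) := Subgroup.index_dvd_card _
    have h5 : (χu.ker.index).Coprime p :=
      Nat.Coprime.coprime_dvd_left (hcardG ▸ h4) hcop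
    have h6 : χu.ker.index ∣ p ^ (n - 1) * (p - 1) := by
      rw [← h3, h1]
      exact h2
    exact (h5.pow_right (n - 1)).dvd_of_dvd_mul_left h6
  have hrel1 : S.relIndex χu.ker = 1 := by
    have hd : S.relIndex χu.ker = β.ker.index := congrArg Subgroup.index hsubker
    have hdvdp : S.relIndex χu.ker ∣ p := by
      rw [hd, Subgroup.index_ker]
      have h2 := Subgroup.card_subgroup_dvd_card β.range
      have hcardMult : Nat.card (Multiplicative (ZMod p)) = p := by
        rw [Nat.card_congr Multiplicative.toAdd, Nat.card_zmod]
      rwa [hcardMult] at h2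
    have hdvdG : S.relIndex χu.ker ∣ Nat.card (K ≃ₐ[ℚ] K) := by
      have h7 : S.relIndex χu.ker ∣ S.index := ⟨χu.ker.index, (Subgroup.relIndex_mul_index hSK1).symm⟩
      exact h7.trans (Subgroup.index_dvd_card S)
    have hcp : (S.relIndex χu.ker).Coprime p :=
      Nat.Coprime.coprime_dvd_left (hcardG ▸ hdvdG) hcop
    exact hcp.eq_one_of_dvd hdvdp
  have hSidx : S.index ∣ p - 1 := by
    have h8 := Subgroup.relIndex_mul_index hSK1
    rw [hrel1, one_mul] at h8
    rw [← h8]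
    exact hK1idx
  -- finally, [ℚ(x,y) : ℚ] = S.index
  have hFfix : IntermediateField.fixedField S = F := IsGalois.fixedField_fixingSubgroup F
  have hrankS : Module.finrank (↥F) K = Nat.card S := by
    conv_lhs => rw [← hFfix]
    rw [IntermediateField.finrank_fixedField_eq_card]
  have htower : Module.finrank ℚ (↥F) * Module.finrank (↥F) K = Module.finrank ℚ K :=
    Module.finrank_mul_finrank ℚ (↥F) K
  have hlag : Nat.card S * S.index = Nat.card (K ≃ₐ[ℚ] K) := S.card_mul_index
  have hpos : 0 < Nat.card S := Nat.card_pos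
  have hfr : Module.finrank ℚ (↥F) = S.index := by
    have h8 : Module.finrank ℚ (↥F) * Nat.card S = S.index * Nat.card S := by
      calc Module.finrank ℚ (↥F) * Nat.card S
          = Module.finrank ℚ (↥F) * Module.finrank (↥F) K := by rw [hrankS]
        _ = Module.finrank ℚ K := htower
        _ = Nat.card (K ≃ₐ[ℚ] K) := hcardG.symm
        _ = Nat.card S * S.index := hlag.symm
        _ = S.index * Nat.card S := mul_comm _ _
    exact Nat.eq_of_mul_eq_mul_right hpos h8
  rw [hfr]
  exact hSidx
end
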